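/- arXiv:2503.04712 — 5 statements merged into one kernel-verified Lean document; each statement's English description precedes it below -/
import Mathlib

section
/- Suppose F : E → ℝ is twice continuously differentiable with F(w) ≥ 0 for all w, and F is (L0, L1)-smooth, i.e. ‖∇²F(w)‖_op ≤ L0 + L1·‖∇F(w)‖ for all w, where L0 ≥ 0 and L1 > 0. Then for all w, ‖∇F(w)‖ ≤ L0/(2·L1) + 4·L1·F(w). -/
open Real Set InnerProductSpace

lemma exp_nine_twentieths_le : Real.exp (9/20 : ℝ) ≤ 8/5 := by
  have h20 : Real.exp ((9:ℝ)/20) ^ 20 = Real.exp 1 ^ 9 := by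
    rw [← Real.exp_nat_mul, ← Real.exp_nat_mul]; norm_num
  have hlt : Real.exp 1 ^ 9 ≤ (2.7182818286 : ℝ) ^ 9 :=
    pow_le_pow_left₀ (Real.exp_pos 1).le Real.exp_one_lt_d9.le 9
  have hnum : (2.7182818286 : ℝ) ^ 9 ≤ (8/5 : ℝ) ^ 20 := by norm_num
  have : Real.exp ((9:ℝ)/20) ^ 20 ≤ (8/5 : ℝ) ^ 20 := by
    rw [h20]; exact hlt.trans hnum
  exact le_of_pow_le_pow_left₀ (by norm_num) (by norm_num) this

set_option maxHeartbeats 1000000 in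
/-- If `F ≥ 0` is `C²` and `(L0, L1)`-smooth with `L1 > 0`, then
`‖∇F(w)‖ ≤ L0/(2L1) + 4L1 F(w)` for all `w`. -/
theorem grad_bound_of_L0L1_smooth (d : ℕ) (hd : 1 ≤ d)
    (F : EuclideanSpace ℝ (Fin d) → ℝ)
    (hF : ContDiff ℝ 2 F) (hFnn : ∀ w, 0 ≤ F w)
    (L0 L1 : ℝ) (hL0 : 0 ≤ L0) (hL1 : 0 < L1)
    (hsmooth : ∀ w, ‖fderiv ℝ (fderiv ℝ F) w‖ ≤ L0 + L1 * ‖gradient F w‖) :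
    ∀ w, ‖gradient F w‖ ≤ L0 / (2 * L1) + 4 * L1 * F w := by
  intro w
  set g : ℝ := ‖gradient F w‖ with hgdef
  rcases eq_or_lt_of_le (norm_nonneg (gradient F w)) with hg0 | hg
  · rw [hgdef, ← hg0]
    have := hFnn w
    positivity
  -- g > 0 case
  have hgne : g ≠ 0 := ne_of_gt hg
  have hF1 : Differentiable ℝ F := hF.differentiable (by norm_num)
  have hF2c : ContDiff ℝ 1 (fderiv ℝ F) := hF.fderiv_right (by norm_num)
  have hF2 : Differentiable ℝ (fderiv ℝ F) := hF2c.differentiable (by norm_num)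
  set u : EuclideanSpace ℝ (Fin d) := (-g⁻¹) • gradient F w with hudef
  have hu : ‖u‖ = 1 := by
    rw [hudef, norm_smul, norm_neg, norm_inv, Real.norm_eq_abs, abs_of_pos hg, ← hgdef,
      inv_mul_cancel₀ hgne]
  set γ : ℝ → EuclideanSpace ℝ (Fin d) := fun t => w + t • u with hγdef
  have hγ : ∀ t, HasDerivAt γ u t := by
    intro t
    have h1 : HasDerivAt (fun s : ℝ => s • u) ((1:ℝ) • u) t := (hasDerivAt_id t).smul_const u
    simpa [hγdef] using h1.const_add w
  have hγ0 : γ 0 = w := by simp [hγdef]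
  -- the derivative of F along the curve
  have hψ : ∀ t, HasDerivAt (fun s => F (γ s)) (fderiv ℝ F (γ t) u) t := fun t =>
    ((hF1 (γ t)).hasFDerivAt).comp_hasDerivAt t (hγ t)
  -- the derivative of the gradient (as a continuous linear map) along the curve
  have hΦ : ∀ t, HasDerivAt (fun s => fderiv ℝ F (γ s)) (fderiv ℝ (fderiv ℝ F) (γ t) u) t :=
    fun t => ((hF2 (γ t)).hasFDerivAt).comp_hasDerivAt t (hγ t)
  have hψ' : ∀ t, HasDerivAt (fun s => fderiv ℝ F (γ s) u)
      (fderiv ℝ (fderiv ℝ F) (γ t) u u) t := by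
    intro t
    have := (hΦ t).clm_apply (hasDerivAt_const t u)
    simpa using this
  -- norms of gradients equal norms of fderivs
  have hnorm : ∀ x : EuclideanSpace ℝ (Fin d), ‖gradient F x‖ = ‖fderiv ℝ F x‖ := fun x =>
    LinearIsometryEquiv.norm_map _ _
  set r : ℝ := 9 / (20 * L1) with hrdef
  have hr : 0 < r := by positivity
  -- Grönwall bound for the gradient along the curve
  have gron : ∀ t ∈ Icc (0:ℝ) r,
      ‖fderiv ℝ F (γ t)‖ ≤ gronwallBound g L1 L0 (t - 0) := by
    apply norm_le_gronwallBound_of_norm_deriv_right_le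
    · exact (hF2c.continuous.comp (continuous_const.add (continuous_id.smul continuous_const) : Continuous γ)).continuousOn
    · exact fun x _ => (hΦ x).hasDerivWithinAt
    · rw [hγ0, ← hnorm w]
    · intro x _
      have h1 : ‖fderiv ℝ (fderiv ℝ F) (γ x) u‖ ≤ ‖fderiv ℝ (fderiv ℝ F) (γ x)‖ := by
        calc ‖fderiv ℝ (fderiv ℝ F) (γ x) u‖
            ≤ ‖fderiv ℝ (fderiv ℝ F) (γ x)‖ * ‖u‖ := ContinuousLinearMap.le_opNorm _ _
          _ = ‖fderiv ℝ (fderiv ℝ F) (γ x)‖ := by rw [hu, mul_one]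
      calc ‖fderiv ℝ (fderiv ℝ F) (γ x) u‖ ≤ ‖fderiv ℝ (fderiv ℝ F) (γ x)‖ := h1
        _ ≤ L0 + L1 * ‖gradient F (γ x)‖ := hsmooth _
        _ = L1 * ‖fderiv ℝ F (γ x)‖ + L0 := by rw [hnorm]; ring
  have hgb : ∀ t ∈ Icc (0:ℝ) r,
      L0 + L1 * ‖fderiv ℝ F (γ t)‖ ≤ (L1 * g + L0) * Real.exp (L1 * t) := by
    intro t ht
    have h1 := gron t ht
    rw [gronwallBound_of_K_ne_0 (ne_of_gt hL1)] at h1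
    simp only [sub_zero] at h1
    have hexp : (1:ℝ) ≤ Real.exp (L1 * t) := by
      rw [← Real.exp_zero]
      exact Real.exp_le_exp.2 (by nlinarith [ht.1])
    have h3 : L1 * ‖fderiv ℝ F (γ t)‖ ≤
        L1 * (g * Real.exp (L1 * t) + L0 / L1 * (Real.exp (L1 * t) - 1)) :=
      mul_le_mul_of_nonneg_left h1 hL1.le
    have h4 : L1 * (g * Real.exp (L1 * t) + L0 / L1 * (Real.exp (L1 * t) - 1))
        = L1 * g * Real.exp (L1 * t) + L0 * (Real.exp (L1 * t) - 1) := by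
      field_simp
    nlinarith [h3]
  -- bound on the second derivative along the curve
  have hψ''b : ∀ t ∈ Icc (0:ℝ) r,
      |fderiv ℝ (fderiv ℝ F) (γ t) u u| ≤ (L1 * g + L0) * Real.exp (L1 * t) := by
    intro t ht
    have h1 : |fderiv ℝ (fderiv ℝ F) (γ t) u u| ≤ ‖fderiv ℝ (fderiv ℝ F) (γ t)‖ := by
      calc |fderiv ℝ (fderiv ℝ F) (γ t) u u| = ‖fderiv ℝ (fderiv ℝ F) (γ t) u u‖ := rfl
        _ ≤ ‖fderiv ℝ (fderiv ℝ F) (γ t) u‖ * ‖u‖ := ContinuousLinearMap.le_opNorm _ _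
        _ ≤ (‖fderiv ℝ (fderiv ℝ F) (γ t)‖ * ‖u‖) * ‖u‖ :=
            mul_le_mul_of_nonneg_right (ContinuousLinearMap.le_opNorm _ _) (norm_nonneg u)
        _ = ‖fderiv ℝ (fderiv ℝ F) (γ t)‖ := by rw [hu]; ring
    calc |fderiv ℝ (fderiv ℝ F) (γ t) u u| ≤ ‖fderiv ℝ (fderiv ℝ F) (γ t)‖ := h1
      _ ≤ L0 + L1 * ‖gradient F (γ t)‖ := hsmooth _
      _ = L0 + L1 * ‖fderiv ℝ F (γ t)‖ := by rw [hnorm]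
      _ ≤ (L1 * g + L0) * Real.exp (L1 * t) := hgb t ht
  -- initial value of the directional derivative
  have hinit : fderiv ℝ F w u = -g := by
    have hfd : fderiv ℝ F w = (InnerProductSpace.toDual ℝ (EuclideanSpace ℝ (Fin d))) (gradient F w) := by
      rw [gradient, LinearIsometryEquiv.apply_symm_apply]
    rw [hfd, InnerProductSpace.toDual_apply_apply, hudef, real_inner_smul_right,
      real_inner_self_eq_norm_sq, ← hgdef]
    field_simp
  -- Step B : k t := ψ' t + g - (g + L0/L1)(e^{L1 t} - 1) is ≤ 0 on [0, r]
  set k : ℝ → ℝ := fun t =>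
    fderiv ℝ F (γ t) u + g - (g + L0 / L1) * (Real.exp (L1 * t) - 1) with hkdef
  have hk' : ∀ t, HasDerivAt k
      (fderiv ℝ (fderiv ℝ F) (γ t) u u - (g + L0 / L1) * (L1 * Real.exp (L1 * t))) t := by
    intro t
    have he : HasDerivAt (fun s : ℝ => Real.exp (L1 * s)) (L1 * Real.exp (L1 * t)) t := by
      have := (Real.hasDerivAt_exp (L1 * t)).comp t ((hasDerivAt_id t).const_mul L1)
      simpa [mul_comm, Function.comp_def] using this
    have h1 : HasDerivAt (fun s => (g + L0 / L1) * (Real.exp (L1 * s) - 1))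
        ((g + L0 / L1) * (L1 * Real.exp (L1 * t))) t := by
      simpa using ((he.sub_const 1).const_mul (g + L0 / L1))
    exact ((hψ' t).add_const g).sub h1
  have hknonpos : ∀ t ∈ Icc (0:ℝ) r, k t ≤ 0 := by
    intro t ht
    have hanti : AntitoneOn k (Icc (0:ℝ) r) := by
      apply antitoneOn_of_deriv_nonpos (convex_Icc 0 r)
      · exact fun x _ => ((hk' x).continuousAt).continuousWithinAt
      · intro x hx
        exact ((hk' x).differentiableAt).differentiableWithinAt
      · intro x hx
        rw [interior_Icc] at hx
        rw [(hk' x).deriv]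
        have hb := hψ''b x (Ioo_subset_Icc_self hx)
        have h2 : (g + L0 / L1) * (L1 * Real.exp (L1 * x)) = (L1 * g + L0) * Real.exp (L1 * x) := by
          field_simp
        have := abs_le.1 hb
        linarith [this.2, h2.ge, h2.le]
    have hk0 : k 0 = 0 := by
      simp only [hkdef, hγ0, mul_zero, Real.exp_zero, sub_self, mul_zero, hinit]
      ring
    have := hanti (left_mem_Icc.2 hr.le) ht ht.1
    rw [hk0] at this
    exact this
  -- Step C : h t := F(γ t) + g t - (g + L0/L1)((e^{L1 t}-1)/L1 - t) is nonincreasing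
  set h : ℝ → ℝ := fun t =>
    F (γ t) + g * t - (g + L0 / L1) * ((Real.exp (L1 * t) - 1) / L1 - t) with hhdef
  have hh' : ∀ t, HasDerivAt h (k t) t := by
    intro t
    have he : HasDerivAt (fun s : ℝ => Real.exp (L1 * s)) (L1 * Real.exp (L1 * t)) t := by
      have := (Real.hasDerivAt_exp (L1 * t)).comp t ((hasDerivAt_id t).const_mul L1)
      simpa [mul_comm, Function.comp_def] using this
    have h1 : HasDerivAt (fun s : ℝ => (Real.exp (L1 * s) - 1) / L1 - s)
        (Real.exp (L1 * t) - 1) t := by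
      have h2 : HasDerivAt (fun s : ℝ => (Real.exp (L1 * s) - 1) / L1)
          ((L1 * Real.exp (L1 * t)) / L1) t := (he.sub_const 1).div_const L1
      have h3 : (L1 * Real.exp (L1 * t)) / L1 = Real.exp (L1 * t) := by
        field_simp
      rw [h3] at h2
      exact h2.sub (hasDerivAt_id t)
    have h4 : HasDerivAt (fun s : ℝ => g * s) g t := by
      simpa using (hasDerivAt_id t).const_mul g
    have h5 := ((hψ t).add h4).sub (h1.const_mul (g + L0 / L1))
    exact h5
  have hmono : h r ≤ h 0 := by
    have hanti : AntitoneOn h (Icc (0:ℝ) r) := by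
      apply antitoneOn_of_deriv_nonpos (convex_Icc 0 r)
      · exact fun x _ => ((hh' x).continuousAt).continuousWithinAt
      · exact fun x _ => ((hh' x).differentiableAt).differentiableWithinAt
      · intro x hx
        rw [interior_Icc] at hx
        rw [(hh' x).deriv]
        exact hknonpos x (Ioo_subset_Icc_self hx)
    exact hanti (left_mem_Icc.2 hr.le) (right_mem_Icc.2 hr.le) hr.le
  have hh0 : h 0 = F w := by
    simp [hhdef, hγ0]
  -- Put it together
  have hexp : Real.exp (L1 * r) ≤ 8/5 := by
    have : L1 * r = 9/20 := by
      rw [hrdef]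
      field_simp
    rw [this]
    exact exp_nine_twentieths_le
  have hFγr : 0 ≤ F (γ r) := hFnn _
  have hhr : h r = F (γ r) + g * r - (g + L0 / L1) * ((Real.exp (L1 * r) - 1) / L1 - r) := rfl
  have hcoef : 0 ≤ g + L0 / L1 := by positivity
  have hterm : (Real.exp (L1 * r) - 1) / L1 - r ≤ 3 / (20 * L1) := by
    have h1 : Real.exp (L1 * r) - 1 ≤ 3/5 := by linarith
    have h2 : (Real.exp (L1 * r) - 1) / L1 ≤ (3/5) / L1 := by
      gcongr
    have h3 : (3/5 : ℝ) / L1 - 9 / (20 * L1) = 3 / (20 * L1) := by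
      field_simp
      ring
    rw [hrdef]
    linarith
  have hfinal : 0 ≤ F w - g * r + (g + L0 / L1) * (3 / (20 * L1)) := by
    have h3 : (g + L0 / L1) * ((Real.exp (L1 * r) - 1) / L1 - r)
        ≤ (g + L0 / L1) * (3 / (20 * L1)) := mul_le_mul_of_nonneg_left hterm hcoef
    have h4 : F (γ r) = h r - g * r + (g + L0 / L1) * ((Real.exp (L1 * r) - 1) / L1 - r) := by
      rw [hhr]; ring
    have h10 : h r ≤ F w := by rw [← hh0]; exact hmono
    have h9 : F (γ r) ≤ F w - g * r + (g + L0 / L1) * (3 / (20 * L1)) := by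
      rw [h4]
      exact add_le_add (sub_le_sub_right h10 (g * r)) h3
    exact le_trans hFγr h9
  have h5 : 0 ≤ F w - g * (9 / (20 * L1)) + (g + L0 / L1) * (3 / (20 * L1)) := by
    rw [hrdef] at hfinal; exact hfinal
  have h6 : (0:ℝ) ≤ 20 * L1 * L1 * F w - 6 * (g * L1) + 3 * L0 := by
    have hc : (0:ℝ) ≤ 20 * L1 * L1 := by positivity
    have h7 := mul_nonneg hc h5
    have h8 : 20 * L1 * L1 * (F w - g * (9 / (20 * L1)) + (g + L0 / L1) * (3 / (20 * L1)))
        = 20 * L1 * L1 * F w - 6 * (g * L1) + 3 * L0 := by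
      field_simp
      ring
    linarith [h8.le, h8.ge]
  rw [← sub_nonneg]
  have hQ : L0 / (2 * L1) + 4 * L1 * F w - g = (3*L0 + 24*L1*L1*F w - 6*L1*g) / (6 * L1) := by
    field_simp
    ring
  rw [hQ]
  apply div_nonneg _ (by positivity)
  nlinarith [mul_nonneg (mul_nonneg hL1.le hL1.le) (hFnn w)]
end

section
/- Suppose F : E → ℝ is twice continuously differentiable with F(w) ≥ 0 for all w, and F is (L0, L1)-smooth, i.e. ‖∇²F(w)‖_op ≤ L0 + L1·‖∇F(w)‖ for all w, where L0 > 0 and L1 ≥ 0. Then for all w, ‖∇F(w)‖ ≤ 2·L0^{1/2}·F(w)^{1/2} + (5·L1²/L0^{1/2})·F(w)^{3/2}. -/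
open Real Set InnerProductSpace
set_option maxHeartbeats 1000000

lemma exp_half_lb : (1.5:ℝ) ≤ Real.exp (1/2) := by
  nlinarith [Real.add_one_le_exp (1/2:ℝ)]

lemma exp_half_sq : Real.exp (1/2:ℝ) ^ 2 = Real.exp 1 := by
  rw [← Real.exp_nat_mul]; norm_num

lemma exp_half_ub : Real.exp (1/2:ℝ) ≤ 1.6488 := by
  nlinarith [Real.exp_one_lt_d9.le, exp_half_sq, Real.exp_pos (1/2:ℝ)]

lemma exp_chord {x : ℝ} (h0 : 0 ≤ x) (h1 : x ≤ 1/2) :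
    Real.exp x ≤ 1 + 2*(Real.exp (1/2) - 1) * x := by
  have := convexOn_exp.2 (Set.mem_univ (0:ℝ)) (Set.mem_univ (1/2:ℝ))
    (show (0:ℝ) ≤ 1 - 2*x by linarith) (show (0:ℝ) ≤ 2*x by linarith) (by ring)
  simp only [smul_eq_mul, mul_zero, zero_add, Real.exp_zero] at this
  have e : 2*x*(1/2) = x := by ring
  rw [e] at this; linarith

lemma gB_le {G L0 L1 t : ℝ} (hG : 0 ≤ G) (hL0 : 0 ≤ L0) (hL1 : 0 ≤ L1)
    (ht : 0 ≤ t) (hhalf : L1 * t ≤ 1/2) :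
    gronwallBound G L1 L0 t ≤ Real.exp (1/2) * G + 2*(Real.exp (1/2) - 1) * L0 * t := by
  rcases eq_or_ne L1 0 with h | h
  · rw [h, gronwallBound_K0]
    have := exp_half_lb
    show G + L0 * t ≤ _
    nlinarith [mul_nonneg hG (show (0:ℝ) ≤ Real.exp (1/2) - 1 by linarith),
      mul_nonneg (mul_nonneg hL0 ht) (show (0:ℝ) ≤ 2*Real.exp (1/2) - 3 by linarith)]
  · rw [gronwallBound_of_K_ne_0 h]
    have hL1' : 0 < L1 := lt_of_le_of_ne hL1 (Ne.symm h)
    have h1 : Real.exp (L1*t) ≤ Real.exp (1/2) := Real.exp_le_exp.2 hhalf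
    have h2 : Real.exp (L1*t) ≤ 1 + 2*(Real.exp (1/2) - 1) * (L1*t) :=
      exp_chord (by positivity) hhalf
    have h3 : L0/L1 * (Real.exp (L1*t) - 1) ≤ L0/L1 * (2*(Real.exp (1/2) - 1) * (L1*t)) := by
      apply mul_le_mul_of_nonneg_left (by linarith) (by positivity)
    have h4 : L0/L1 * (2*(Real.exp (1/2) - 1) * (L1*t)) = 2*(Real.exp (1/2)-1)*L0*t := by
      field_simp
    nlinarith [mul_le_mul_of_nonneg_left h1 hG]


lemma key {d : ℕ} (F : EuclideanSpace ℝ (Fin d) → ℝ)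
    (hF : ContDiff ℝ 2 F) (hFnn : ∀ w, 0 ≤ F w)
    (L0 L1 : ℝ) (hL0 : 0 < L0) (hL1 : 0 ≤ L1)
    (hsmooth : ∀ w, ‖fderiv ℝ (fderiv ℝ F) w‖ ≤ L0 + L1 * ‖gradient F w‖)
    (w : EuclideanSpace ℝ (Fin d)) (hw : gradient F w ≠ 0)
    (T B : ℝ) (hT : 0 < T) (hhalf : L1 * T ≤ 1/2)
    (hB : Real.exp (1/2) * ‖gradient F w‖ + 2*(Real.exp (1/2) - 1) * L0 * T ≤ B) :
    ‖gradient F w‖ * T ≤ F w + (L0 + L1 * B) * T^2 / 2 := by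
  set G : ℝ := ‖gradient F w‖ with hGdef
  have hG : 0 < G := norm_pos_iff.2 hw
  set v : EuclideanSpace ℝ (Fin d) := -(G⁻¹ • gradient F w) with hvdef
  have hv : ‖v‖ = 1 := by
    rw [hvdef, norm_neg, norm_smul, norm_inv, norm_norm, ← hGdef, inv_mul_cancel₀ hG.ne']
  have hline : ∀ t : ℝ, HasDerivAt (fun s : ℝ => w + s • v) v t := by
    intro t
    simpa using ((hasDerivAt_id t).smul_const v).const_add w
  have hC1 : ContDiff ℝ 1 (fderiv ℝ F) := hF.fderiv_right (le_refl _)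
  have hH : ∀ x : EuclideanSpace ℝ (Fin d), HasFDerivAt (fderiv ℝ F) (fderiv ℝ (fderiv ℝ F) x) x :=
    fun x => (hC1.differentiable one_ne_zero x).hasFDerivAt
  set ψ : ℝ → EuclideanSpace ℝ (Fin d) := fun t => gradient F (w + t • v) with hψdef
  set ψ' : ℝ → EuclideanSpace ℝ (Fin d) := fun t =>
    (toDual ℝ (EuclideanSpace ℝ (Fin d))).symm ((fderiv ℝ (fderiv ℝ F) (w + t • v)) v) with hψ'def
  have hψd : ∀ t : ℝ, HasDerivAt ψ (ψ' t) t := by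
    intro t
    have h1 : HasDerivAt (fun s : ℝ => fderiv ℝ F (w + s • v))
        ((fderiv ℝ (fderiv ℝ F) (w + t • v)) v) t :=
      (hH (w + t • v)).comp_hasDerivAt t (hline t)
    have := ((toDual ℝ (EuclideanSpace ℝ (Fin d))).symm.toContinuousLinearEquiv.toContinuousLinearMap.hasFDerivAt).comp_hasDerivAt t h1
    rw [hψdef, hψ'def]; exact this
  have hψ'norm : ∀ t : ℝ, ‖ψ' t‖ ≤ L0 + L1 * ‖ψ t‖ := by
    intro t
    have h1 : ‖ψ' t‖ = ‖(fderiv ℝ (fderiv ℝ F) (w + t • v)) v‖ :=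
      LinearIsometryEquiv.norm_map _ _
    have h2 : ‖(fderiv ℝ (fderiv ℝ F) (w + t • v)) v‖ ≤ ‖fderiv ℝ (fderiv ℝ F) (w + t • v)‖ := by
      simpa [hv] using (fderiv ℝ (fderiv ℝ F) (w + t • v)).le_opNorm v
    exact h1 ▸ (h2.trans (hsmooth _))
  have hψ0 : ψ 0 = gradient F w := by simp [hψdef]
  have hgron : ∀ t ∈ Icc (0:ℝ) T, ‖ψ t‖ ≤ gronwallBound G L1 L0 t := by
    intro t ht
    have := norm_le_gronwallBound_of_norm_deriv_right_le
      (f := ψ) (f' := ψ') (δ := G) (K := L1) (ε := L0) (a := 0) (b := T)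
      (fun x _ => (hψd x).continuousAt.continuousWithinAt)
      (fun x _ => (hψd x).hasDerivWithinAt)
      (by rw [hψ0])
      (fun x _ => by linarith [hψ'norm x])
      t ht
    simpa using this
  have hcexp : (1.5:ℝ) ≤ Real.exp (1/2) := by nlinarith [Real.add_one_le_exp (1/2:ℝ)]
  have hψle : ∀ t ∈ Icc (0:ℝ) T, ‖ψ t‖ ≤ B := by
    intro t ht
    have h1 := hgron t ht
    have h2 : gronwallBound G L1 L0 t ≤
        Real.exp (1/2) * G + 2*(Real.exp (1/2) - 1) * L0 * t :=
      gB_le hG.le hL0.le hL1 ht.1 (le_trans (by nlinarith [ht.2] : L1 * t ≤ L1 * T) hhalf)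
    have h3 : 2*(Real.exp (1/2) - 1) * L0 * t ≤ 2*(Real.exp (1/2) - 1) * L0 * T := by
      have : (0:ℝ) ≤ 2*(Real.exp (1/2) - 1) * L0 := by nlinarith
      nlinarith [ht.2]
    linarith
  set M : ℝ := L0 + L1 * B with hMdef
  have hψ'M : ∀ t ∈ Icc (0:ℝ) T, ‖ψ' t‖ ≤ M := by
    intro t ht
    have := hψ'norm t
    have := hψle t ht
    rw [hMdef]
    nlinarith
  have hMVT : ∀ t ∈ Icc (0:ℝ) T, ‖ψ t - ψ 0‖ ≤ M * t := by
    intro t ht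
    have := (convex_Icc (0:ℝ) T).norm_image_sub_le_of_norm_hasDerivWithin_le
      (f := ψ) (f' := ψ') (fun x hx => (hψd x).hasDerivWithinAt) hψ'M
      (left_mem_Icc.2 hT.le) ht
    simpa [abs_of_nonneg ht.1] using this
  -- derivative of φ
  have hFd : ∀ x : EuclideanSpace ℝ (Fin d), HasFDerivAt F (fderiv ℝ F x) x :=
    fun x => (hF.differentiable (by norm_num) x).hasFDerivAt
  set φ : ℝ → ℝ := fun t => F (w + t • v) with hφdef
  have hφd : ∀ t : ℝ, HasDerivAt φ ((fderiv ℝ F (w + t • v)) v) t :=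
    fun t => (hFd (w + t • v)).comp_hasDerivAt t (hline t)
  have hinner : ∀ x : EuclideanSpace ℝ (Fin d),
      (fderiv ℝ F x) v = @inner ℝ _ _ (gradient F x) v := by
    intro x
    rw [gradient, toDual_symm_apply]
  have hφ'0 : (fderiv ℝ F w) v = -G := by
    rw [hinner w, hvdef]
    rw [inner_neg_right, real_inner_smul_right, real_inner_self_eq_norm_mul_norm]
    rw [← hGdef]
    field_simp
  have hφ'le : ∀ t ∈ Icc (0:ℝ) T, (fderiv ℝ F (w + t • v)) v ≤ -G + M * t := by
    intro t ht
    have h1 : (fderiv ℝ F (w + t • v)) v = @inner ℝ _ _ (ψ t) v := hinner _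
    have h2 : @inner ℝ _ _ (ψ t) v =
        @inner ℝ _ _ (ψ 0) v + @inner ℝ _ _ (ψ t - ψ 0) v := by
      rw [inner_sub_left]; ring
    have h3 : @inner ℝ _ _ (ψ t - ψ 0) v ≤ ‖ψ t - ψ 0‖ := by
      have := real_inner_le_norm (ψ t - ψ 0) v
      rw [hv] at this; linarith [this]
    have h4 : @inner ℝ _ _ (ψ 0) v = -G := by
      rw [hψ0, ← hinner w, hφ'0]
    have := hMVT t ht
    rw [h1, h2, h4]
    linarith
  -- monotone auxiliary function
  set h : ℝ → ℝ := fun t => φ t - φ 0 + G * t - M * t^2 / 2 with hhdef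
  have hhd : ∀ t : ℝ, HasDerivAt h ((fderiv ℝ F (w + t • v)) v + G - M * t) t := by
    intro t
    have h1 : HasDerivAt (fun s : ℝ => M * s^2 / 2) (M * t) t := by
      have := ((hasDerivAt_pow 2 t).const_mul M).div_const 2
      simpa using this.congr_deriv (by ring)
    have h2 : HasDerivAt (fun s : ℝ => G * s) G t := by
      simpa using (hasDerivAt_id t).const_mul G
    exact (((hφd t).sub_const (φ 0)).add h2).sub h1
  have hanti : AntitoneOn h (Icc (0:ℝ) T) := by
    apply antitoneOn_of_deriv_nonpos (convex_Icc 0 T)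
    · exact fun x _ => ((hhd x).continuousAt).continuousWithinAt
    · intro x hx
      rw [interior_Icc] at hx
      exact ((hhd x).differentiableAt).differentiableWithinAt
    · intro x hx
      rw [interior_Icc] at hx
      rw [(hhd x).deriv]
      have := hφ'le x ⟨hx.1.le, hx.2.le⟩
      linarith
  have hfin : h T ≤ h 0 := hanti (left_mem_Icc.2 hT.le) (right_mem_Icc.2 hT.le) hT.le
  have h0 : h 0 = 0 := by simp [hhdef]
  have hφT : 0 ≤ φ T := hFnn _
  have hφ0 : φ 0 = F w := by simp [hφdef]
  rw [h0] at hfin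
  rw [hhdef] at hfin
  simp only [hφ0] at hfin
  have : φ T - F w + G * T - M * T^2/2 ≤ 0 := hfin
  linarith

lemma caseA_contra (a b G c : ℝ) (ha : 0 < a) (hb0 : 0 ≤ b) (hG : 0 < G)
    (hc_lb : (1.5:ℝ) ≤ c) (hc_ub : c ≤ 1.6488)
    (A1 : G^2 ≤ 2*a^2 + 2*(2*c-1)*b*G)
    (A2 : 2*a^2 + 5*b^2 < G*a)
    (hcase : 2*b ≤ a) : False := by
  have hab : 0 ≤ a*b := mul_nonneg ha.le hb0
  have step4 : 0 < 2*a^2 + 5*b^2 - 2*(2*c-1)*a*b := by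
    nlinarith [sq_nonneg (a - 1.1488*b), sq_nonneg b]
  have step1 : (2*a^2+5*b^2)*G < G^2*a := by nlinarith [mul_lt_mul_of_pos_right A2 hG]
  have step2 : G^2*a ≤ (2*a^2 + 2*(2*c-1)*b*G)*a := mul_le_mul_of_nonneg_right A1 ha.le
  have step3 : (2*a^2+5*b^2 - 2*(2*c-1)*a*b)*G < 2*a^3 := by nlinarith [step1, step2]
  have step5 : (2*a^2+5*b^2 - 2*(2*c-1)*a*b)*(2*a^2+5*b^2)
      < (2*a^2+5*b^2 - 2*(2*c-1)*a*b)*(G*a) := by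
    exact mul_lt_mul_of_pos_left A2 step4
  have step6 : (2*a^2+5*b^2 - 2*(2*c-1)*a*b)*(2*a^2+5*b^2) < 2*a^4 := by
    nlinarith [mul_lt_mul_of_pos_right step3 ha]
  have hq : 0 ≤ (1.6488 - c) * (a*b) * (2*a^2+5*b^2) :=
    mul_nonneg (mul_nonneg (by linarith) hab) (by positivity)
  nlinarith [step6, hq, sq_nonneg (b^2 - 0.45952*(a*b)), sq_nonneg (a*b - 0.31215*a^2),
    mul_pos (mul_pos ha ha) (mul_pos ha ha)]

lemma caseB_contra (a b G c : ℝ) (ha : 0 < a) (hb : 0 < b) (hG : 0 < G)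
    (hc_lb : (1.5:ℝ) ≤ c) (hc_ub : c ≤ 1.6488)
    (B1 : 4*b*G ≤ 8*b^2 + c*a^2 + c*b*G)
    (A2 : 2*a^2 + 5*b^2 < G*a)
    (hcase : a < 2*b) : False := by
  -- (4-c) b G ≤ 8b² + ca², G a > 2a²+5b² ⇒ (4-c) b (2a²+5b²) < (8b²+ca²) a
  have h1 : (4-c)*b*(2*a^2+5*b^2) < (4-c)*b*(G*a) := by
    apply mul_lt_mul_of_pos_left A2
    nlinarith [mul_pos hb hG]
  have h2 : (4-c)*b*(G*a) ≤ (8*b^2 + c*a^2)*a := by nlinarith [B1, mul_pos hb hG]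
  -- now contradiction: (4-c) b (2a²+5b²) ≥ (8b²+ca²)a when a ≤ 2b
  nlinarith [h1, h2, mul_pos ha hb, sq_nonneg (a - 2*b), mul_pos ha ha, mul_pos hb hb, mul_nonneg (mul_nonneg ha.le ha.le) hb.le, mul_nonneg (mul_nonneg hb.le hb.le) hb.le, sq_nonneg (2*b - a), mul_nonneg (sq_nonneg (2*b-a)) hb.le, mul_nonneg (sq_nonneg (2*b-a)) ha.le]

/-- If `F ≥ 0` is `C²` and `(L0, L1)`-smooth with `L0 > 0`, then
`‖∇F(w)‖ ≤ 2 L0^{1/2} F(w)^{1/2} + (5 L1²/L0^{1/2}) F(w)^{3/2}` for all `w`. -/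
theorem grad_rho0_bound_of_L0L1_smooth (d : ℕ) (hd : 1 ≤ d)
    (F : EuclideanSpace ℝ (Fin d) → ℝ)
    (hF : ContDiff ℝ 2 F) (hFnn : ∀ w, 0 ≤ F w)
    (L0 L1 : ℝ) (hL0 : 0 < L0) (hL1 : 0 ≤ L1)
    (hsmooth : ∀ w, ‖fderiv ℝ (fderiv ℝ F) w‖ ≤ L0 + L1 * ‖gradient F w‖) :
    ∀ w, ‖gradient F w‖ ≤
      2 * L0 ^ ((1 : ℝ) / 2) * F w ^ ((1 : ℝ) / 2)
        + 5 * L1 ^ 2 / L0 ^ ((1 : ℝ) / 2) * F w ^ ((3 : ℝ) / 2) := by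
  intro w
  have hc_lb : (1.5:ℝ) ≤ Real.exp (1/2) := by nlinarith [Real.add_one_le_exp (1/2:ℝ)]
  have hc_ub : Real.exp (1/2:ℝ) ≤ 1.6488 := by
    have h2 : Real.exp (1/2:ℝ) ^ 2 = Real.exp 1 := by rw [← Real.exp_nat_mul]; norm_num
    nlinarith [Real.exp_one_lt_d9.le, Real.exp_pos (1/2:ℝ)]
  set c : ℝ := Real.exp (1/2) with hcdef
  -- rewrite rpow in terms of sqrt
  set s0 : ℝ := Real.sqrt L0 with hs0def
  set sF : ℝ := Real.sqrt (F w) with hsFdef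
  have hs0 : 0 < s0 := Real.sqrt_pos.2 hL0
  have hsF0 : 0 ≤ sF := Real.sqrt_nonneg _
  have hs0sq : s0^2 = L0 := Real.sq_sqrt hL0.le
  have hsFsq : sF^2 = F w := Real.sq_sqrt (hFnn w)
  have hL0r : L0 ^ ((1:ℝ)/2) = s0 := by rw [hs0def, Real.sqrt_eq_rpow]
  have hF12 : F w ^ ((1:ℝ)/2) = sF := by rw [hsFdef, Real.sqrt_eq_rpow]
  have hF32 : F w ^ ((3:ℝ)/2) = sF^3 := by
    rw [hsFdef, Real.sqrt_eq_rpow, ← Real.rpow_natCast (F w ^ ((1:ℝ)/2)) 3,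
      ← Real.rpow_mul (hFnn w)]
    norm_num
  rw [hL0r, hF12, hF32]
  rcases eq_or_ne (gradient F w) 0 with hg | hg
  · rw [hg, norm_zero]
    have h1 : 0 ≤ 5 * L1^2 / s0 * sF^3 := by positivity
    nlinarith [mul_nonneg hs0.le hsF0]
  -- F w > 0, else gradient = 0
  have hFw : 0 < F w := by
    rcases lt_or_eq_of_le (hFnn w) with h | h
    · exact h
    · exfalso
      have hmin : IsLocalMin F w := Filter.Eventually.of_forall (fun x => h ▸ hFnn x)
      have : fderiv ℝ F w = 0 := hmin.fderiv_eq_zero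
      exact hg (by rw [gradient, this, map_zero])
  have hsF : 0 < sF := Real.sqrt_pos.2 hFw
  set G : ℝ := ‖gradient F w‖ with hGdef
  have hG : 0 < G := norm_pos_iff.2 hg
  set a : ℝ := s0 * sF with hadef
  set b : ℝ := L1 * sF^2 with hbdef
  have ha : 0 < a := mul_pos hs0 hsF
  have hb0 : 0 ≤ b := by positivity
  by_contra hcon
  push_neg at hcon
  have A2 : 2*a^2 + 5*b^2 < G*a := by
    have h := mul_lt_mul_of_pos_right hcon ha
    have e : (2*s0*sF + 5*L1^2/s0*sF^3) * a = 2*a^2 + 5*b^2 := by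
      rw [hadef, hbdef]; field_simp
    linarith [e ▸ h]
  have hGa : 2*a < G := by nlinarith
  rcases le_or_gt (2*b) a with hcase | hcase
  · -- Case A : small L1 regime
    set T : ℝ := 2*(F w)/G with hTdef
    have hT : 0 < T := by positivity
    have hhalf : L1 * T ≤ 1/2 := by
      have hLT : L1*T = 2*b/G := by rw [hTdef, hbdef, ← hsFsq]; ring
      rw [hLT, div_le_iff₀ hG]; nlinarith
    have hL0T : L0 * T ≤ G/2 := by
      have e : L0*T = 2*a^2/G := by
        rw [hTdef, hadef, ← hsFsq, ← hs0sq]; ring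
      rw [e, div_le_div_iff₀ hG (by norm_num : (0:ℝ) < 2)]
      nlinarith
    have hB : c * G + 2*(c - 1) * L0 * T ≤ (2*c - 1)*G := by
      have h1 : 2*(c-1)*(L0*T) ≤ 2*(c-1)*(G/2) :=
        mul_le_mul_of_nonneg_left hL0T (by nlinarith)
      nlinarith
    have hkey := key F hF hFnn L0 L1 hL0 hL1 hsmooth w hg T ((2*c-1)*G) hT hhalf hB
    have A1 : G^2 ≤ 2*a^2 + 2*(2*c-1)*b*G := by
      have hkey2 := mul_le_mul_of_nonneg_right hkey
        (by positivity : (0:ℝ) ≤ G^2/(2*sF^2))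
      have e1 : G*T*(G^2/(2*sF^2)) = G^2 := by
        rw [hTdef, ← hsFsq]; field_simp
      have e2 : (F w + (L0 + L1*((2*c-1)*G))*T^2/2)*(G^2/(2*sF^2))
          = G^2/2 + (L0 + L1*((2*c-1)*G))*sF^2 := by
        rw [hTdef, ← hsFsq]; field_simp
      rw [e1, e2] at hkey2
      have ea : a^2 = L0*sF^2 := by rw [hadef, ← hs0sq]; ring
      have eb : b*G = L1*sF^2*G := by rw [hbdef]
      nlinarith [hkey2]
    -- contradiction
    exact caseA_contra a b G c ha hb0 hG hc_lb hc_ub A1 A2 hcase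
  · -- Case B : large L1 regime
    have hL1pos : 0 < L1 := by nlinarith [sq_nonneg sF]
    set T : ℝ := 1/(2*L1) with hTdef
    have hT : 0 < T := by positivity
    have hhalf : L1 * T ≤ 1/2 := by
      rw [hTdef]; rw [mul_one_div]; rw [div_le_div_iff₀ (by positivity) (by norm_num)]
      linarith
    set B : ℝ := c * G + 2*(c - 1) * L0 * T with hBdef
    have hkey := key F hF hFnn L0 L1 hL0 hL1 hsmooth w hg T B hT hhalf (le_refl B)
    have B1 : 4*b*G ≤ 8*b^2 + c*a^2 + c*b*G := by
      have eLB : L0 + L1*B = c*L0 + c*L1*G := by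
        rw [hBdef, hTdef]; field_simp; ring
      rw [eLB] at hkey
      have hkey2 := mul_le_mul_of_nonneg_right hkey
        (by positivity : (0:ℝ) ≤ 8*L1^2*sF^2)
      have e1 : G*T*(8*L1^2*sF^2) = 4*b*G := by
        rw [hTdef, hbdef]; field_simp; ring
      have e2 : (F w + (c*L0 + c*L1*G)*T^2/2)*(8*L1^2*sF^2)
          = 8*b^2 + c*a^2 + c*b*G := by
        rw [hTdef, hbdef, hadef, ← hsFsq, ← hs0sq]
        field_simp [hL1pos.ne']; ring
      rw [e1, e2] at hkey2
      exact hkey2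
    -- contradiction
    have hb : 0 < b := by nlinarith
    exact caseB_contra a b G c ha hb hG hc_lb hc_ub B1 A2 hcase
end

section
/- Under the second-order self-bounding assumption, for every w ∈ E one has ‖∇F(w)‖ ≤ ρ0(F(w)), where ρ0(x) = ρ1(x)·√(2·θ(x)) and θ(x) = ∫₀ˣ 1/ρ1(v) dv. -/
/-- `θ(x) = ∫₀ˣ 1/ρ1(v) dv`. -/
noncomputable def sbTheta (ρ1 : ℝ → ℝ) (x : ℝ) : ℝ := ∫ v in (0 : ℝ)..x, 1 / ρ1 v

/-- `ρ0(x) = ρ1(x)·√(2 θ(x))`. -/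
noncomputable def sbRho0 (ρ1 : ℝ → ℝ) (x : ℝ) : ℝ := ρ1 x * Real.sqrt (2 * sbTheta ρ1 x)

open Topology Filter

/-- Under the second-order self-bounding assumption, `‖∇F(w)‖ ≤ ρ0(F(w))` for all `w`. -/
theorem grad_le_rho0_of_selfbounding (d : ℕ) (hd : 1 ≤ d)
    (F : EuclideanSpace ℝ (Fin d) → ℝ)
    (hF : ContDiff ℝ 2 F) (hFnn : ∀ w, 0 ≤ F w)
    (ρ1 : ℝ → ℝ) (hρ1mono : MonotoneOn ρ1 (Set.Ici 0))
    (hρ1cont : ContinuousOn ρ1 (Set.Ici 0))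
    (hρ1pos : ∀ x ∈ Set.Ici (0 : ℝ), 0 < ρ1 x)
    (hbound : ∀ w, ‖fderiv ℝ (fderiv ℝ F) w‖ ≤ ρ1 (F w)) :
    ∀ w, ‖gradient F w‖ ≤ sbRho0 ρ1 (F w) := by
  intro w
  have hMpos : 0 < ρ1 (F w) := hρ1pos _ (hFnn w)
  -- Step 1: the crude bound `‖∇F w‖² ≤ 2 ρ1(F w) F w`.
  have key : ‖gradient F w‖ ^ 2 ≤ 2 * ρ1 (F w) * F w := by
    rcases eq_or_lt_of_le (norm_nonneg (gradient F w)) with hc0 | hc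
    · rw [← hc0]
      have := mul_nonneg (mul_nonneg (zero_le_two) hMpos.le) (hFnn w)
      simpa using this
    set g := gradient F w with hgdef
    set c := ‖g‖ with hcdef
    set v : EuclideanSpace ℝ (Fin d) := (-c⁻¹) • g with hvdef
    have hvnorm : ‖v‖ = 1 := by
      rw [hvdef, norm_smul]
      rw [norm_neg, norm_inv, norm_norm]
      field_simp
      exact div_self hc.ne'
    have hF1 : Differentiable ℝ F := hF.differentiable (by norm_num)
    have hf1 : ContDiff ℝ 1 (fderiv ℝ F) := hF.fderiv_right (by norm_num)
    have hf1d : Differentiable ℝ (fderiv ℝ F) := hf1.differentiable one_ne_zero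
    set γ : ℝ → EuclideanSpace ℝ (Fin d) := fun t => w + t • v with hγdef
    have hγ : ∀ t, HasDerivAt γ v t := by
      intro t
      have : HasDerivAt (fun t : ℝ => w + t • v) v t := by
        simpa using ((hasDerivAt_id t).smul_const v).const_add w
      exact this
    set u : ℝ → ℝ := fun t => F (γ t) with hudef
    set p : ℝ → ℝ := fun t => fderiv ℝ F (γ t) v with hpdef
    have hu : ∀ t, HasDerivAt u (p t) t := fun t =>
      (hF1 (γ t)).hasFDerivAt.comp_hasDerivAt t (hγ t)
    have hp : ∀ t, HasDerivAt p (fderiv ℝ (fderiv ℝ F) (γ t) v v) t := fun t =>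
      (ContinuousLinearMap.apply ℝ ℝ v).hasFDerivAt.comp_hasDerivAt t
        ((hf1d (γ t)).hasFDerivAt.comp_hasDerivAt t (hγ t))
    have hγ0 : γ 0 = w := by simp [hγdef]
    have hu0 : u 0 = F w := by rw [hudef]; simp [hγ0]
    have hp0 : p 0 = -c := by
      have h1 : (inner ℝ g v : ℝ) = fderiv ℝ F w v := by
        rw [hgdef]
        exact InnerProductSpace.toDual_symm_apply
      have h2 : (inner ℝ g v : ℝ) = -c := by
        rw [hvdef, real_inner_smul_right, real_inner_self_eq_norm_sq, ← hcdef]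
        field_simp
      rw [hpdef]
      simp only [hγ0]
      rw [← h1, h2]
    set M := ρ1 (F w) with hMdef
    set T := c / M with hTdef
    have hT0 : 0 < T := div_pos hc hMpos
    set A := {t : ℝ | t ∈ Set.Icc 0 T ∧ ∀ s ∈ Set.Icc (0:ℝ) t, u s ≤ F w} with hAdef
    have hA0 : (0:ℝ) ∈ A := by
      refine ⟨⟨le_rfl, hT0.le⟩, fun s hs => ?_⟩
      have : s = 0 := le_antisymm hs.2 hs.1
      rw [this, hu0]
    have hAbdd : BddAbove A := ⟨T, fun t ht => ht.1.2⟩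
    set T' := sSup A with hT'def
    have hT'le : T' ≤ T := csSup_le ⟨0, hA0⟩ (fun t ht => ht.1.2)
    have hT'0 : 0 ≤ T' := le_csSup hAbdd hA0
    have hucont : Continuous u := continuous_iff_continuousAt.2 fun t => (hu t).continuousAt
    have cl' : ∀ s, 0 ≤ s → s < T' → u s ≤ F w := by
      intro s hs0 hsT
      obtain ⟨t, htA, hst⟩ := exists_lt_of_lt_csSup ⟨0, hA0⟩ hsT
      exact htA.2 s ⟨hs0, hst.le⟩
    have cl : ∀ s ∈ Set.Icc (0:ℝ) T', u s ≤ F w := by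
      intro s hs
      rcases lt_or_eq_of_le hs.2 with hlt | heq
      · exact cl' s hs.1 hlt
      · rcases eq_or_lt_of_le hT'0 with h0 | h0
        · rw [heq, ← h0, hu0]
        · rw [heq]
          have hne : (𝓝[Set.Ico 0 T'] T').NeBot := by
            apply mem_closure_iff_nhdsWithin_neBot.1
            rw [closure_Ico h0.ne]
            exact ⟨hT'0, le_rfl⟩
          refine le_of_tendsto ((hucont.continuousWithinAt (s := Set.Ico 0 T') (x := T')).tendsto) ?_
          filter_upwards [self_mem_nhdsWithin] with x hx
          exact cl' x hx.1 hx.2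
    have hppbound : ∀ s ∈ Set.Icc (0:ℝ) T', ‖fderiv ℝ (fderiv ℝ F) (γ s) v v‖ ≤ M := by
      intro s hs
      have h1 : ‖fderiv ℝ (fderiv ℝ F) (γ s) v v‖ ≤ ‖fderiv ℝ (fderiv ℝ F) (γ s)‖ := by
        calc ‖fderiv ℝ (fderiv ℝ F) (γ s) v v‖
            ≤ ‖fderiv ℝ (fderiv ℝ F) (γ s) v‖ * ‖v‖ := ContinuousLinearMap.le_opNorm _ v
          _ ≤ ‖fderiv ℝ (fderiv ℝ F) (γ s)‖ * ‖v‖ * ‖v‖ := by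
              gcongr
              exact ContinuousLinearMap.le_opNorm _ v
          _ = ‖fderiv ℝ (fderiv ℝ F) (γ s)‖ := by rw [hvnorm]; ring
      refine h1.trans ((hbound (γ s)).trans ?_)
      exact hρ1mono (Set.mem_Ici.2 (hFnn _)) (Set.mem_Ici.2 (hFnn w)) (cl s hs)
    have hpleq : ∀ s ∈ Set.Icc (0:ℝ) T', p s ≤ -c + M * s := by
      intro s hs
      have hmv := Convex.norm_image_sub_le_of_norm_hasDerivWithin_le
        (f := p) (f' := fun t => fderiv ℝ (fderiv ℝ F) (γ t) v v)
        (fun x hx => (hp x).hasDerivWithinAt) hppbound (convex_Icc _ _)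
        (Set.left_mem_Icc.2 hT'0) hs
      have habs : |p s - p 0| ≤ M * s := by
        simpa [Real.norm_eq_abs, abs_of_nonneg hs.1] using hmv
      have := (abs_le.1 habs).2
      rw [hp0] at this
      linarith
    have hMT : M * T = c := by
      rw [hTdef]
      field_simp
    have hTT' : T' = T := by
      by_contra hne
      have hlt : T' < T := lt_of_le_of_ne hT'le hne
      have hpT' : p T' < 0 := by
        have h1 := hpleq T' ⟨hT'0, le_rfl⟩
        have h2 : M * T' < M * T := by
          exact mul_lt_mul_of_pos_left hlt hMpos
        rw [hMT] at h2
        linarith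
      have hslope : Filter.Tendsto (slope u T') (𝓝[>] T') (𝓝 (p T')) := by
        refine (hasDerivAt_iff_tendsto_slope.1 (hu T')).mono_left (nhdsWithin_mono _ ?_)
        exact fun y hy => ne_of_gt hy
      have hev : ∀ᶠ s in 𝓝[>] T', slope u T' s < 0 :=
        hslope.eventually (eventually_lt_nhds hpT')
      have hev2 : ∀ᶠ s in 𝓝[>] T', s < T := by
        filter_upwards [Ioo_mem_nhdsGT_of_mem (Set.mem_Ico.2 ⟨le_rfl, hlt⟩)] with s hs
        exact hs.2
      obtain ⟨a, ha, hsub⟩ := mem_nhdsGT_iff_exists_Ioc_subset.1 (hev.and hev2)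
      have haA : a ∈ A := by
        have haself := hsub ⟨ha, le_rfl⟩
        refine ⟨⟨le_trans hT'0 ha.le, haself.2.le⟩, ?_⟩
        intro s hsIcc
        rcases le_or_gt s T' with h | h
        · exact cl s ⟨hsIcc.1, h⟩
        · have hmem := hsub ⟨h, hsIcc.2⟩
          have hd : 0 < s - T' := sub_pos.2 h
          have hslopeneg := hmem.1
          rw [slope_def_field] at hslopeneg
          have hnum : u s - u T' < 0 := by
            have := (div_lt_iff₀ hd).1 hslopeneg
            linarith
          have huT' := cl T' ⟨hT'0, le_rfl⟩
          linarith
      exact absurd (le_csSup hAbdd haA) (not_le.2 ha)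
    rw [hTT'] at cl hpleq
    set r : ℝ → ℝ := fun t => u t + (c * t - M * t ^ 2 / 2) with hrdef
    have hr : ∀ t, HasDerivAt r (p t + (c - M * t)) t := by
      intro t
      have ha : HasDerivAt (fun t : ℝ => c * t) c t := by
        simpa using (hasDerivAt_id t).const_mul c
      have hb : HasDerivAt (fun t : ℝ => M * t ^ 2 / 2) (M * t) t := by
        have := ((hasDerivAt_pow 2 t).const_mul M).div_const 2
        refine this.congr_deriv ?_
        rw [show (2:ℕ) - 1 = 1 from rfl]
        ring
      exact (hu t).add (ha.sub hb)
    have hanti : AntitoneOn r (Set.Icc 0 T) := by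
      apply antitoneOn_of_deriv_nonpos (convex_Icc _ _)
      · exact (continuous_iff_continuousAt.2 fun t => (hr t).continuousAt).continuousOn
      · intro x hx
        exact (hr x).differentiableAt.differentiableWithinAt
      · intro x hx
        rw [interior_Icc] at hx
        rw [(hr x).deriv]
        have := hpleq x ⟨hx.1.le, hx.2.le⟩
        linarith
    have hfin := hanti (Set.left_mem_Icc.2 hT0.le) (Set.right_mem_Icc.2 hT0.le) hT0.le
    have hr0 : r 0 = F w := by rw [hrdef]; simp [hu0]
    have hrT : r T = u T + (c * T - M * T ^ 2 / 2) := rfl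
    rw [hrT, hr0] at hfin
    have huT : 0 ≤ u T := hFnn _
    have hcT : c * T = M * T ^ 2 := by rw [← hMT]; ring
    rw [hcT] at hfin
    -- hfin : u T + (M*T^2 - M*T^2/2) ≤ F w, so M*T^2/2 ≤ F w
    have h3 : M * T ^ 2 ≤ 2 * F w := by linarith
    have : c ^ 2 = M * (M * T ^ 2) := by rw [← hMT]; ring
    rw [this]
    calc M * (M * T ^ 2) ≤ M * (2 * F w) := by
          exact mul_le_mul_of_nonneg_left h3 hMpos.le
      _ = 2 * M * F w := by ring
  -- Step 2: `θ(x) ≥ x / ρ1 x`, hence `√(2 ρ1 x x) ≤ ρ0 x`.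
  set x := F w with hxdef
  have hx0 : 0 ≤ x := hFnn w
  have hθge : x / ρ1 x ≤ sbTheta ρ1 x := by
    have hint : IntervalIntegrable (fun v => 1 / ρ1 v) MeasureTheory.volume 0 x := by
      apply ContinuousOn.intervalIntegrable_of_Icc hx0
      apply ContinuousOn.div continuousOn_const (hρ1cont.mono Set.Icc_subset_Ici_self)
      exact fun v hv => (hρ1pos v hv.1).ne'
    have hconst : (∫ _ in (0:ℝ)..x, (1 / ρ1 x)) = x * (1 / ρ1 x) := by
      rw [intervalIntegral.integral_const]
      simp [smul_eq_mul]
    have hmono := intervalIntegral.integral_mono_on (μ := MeasureTheory.volume) hx0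
      intervalIntegrable_const hint
      (fun v hv => by
        apply one_div_le_one_div_of_le (hρ1pos v hv.1)
        exact hρ1mono hv.1 (Set.mem_Ici.2 hx0) hv.2)
    calc x / ρ1 x = x * (1 / ρ1 x) := by ring
      _ = ∫ _ in (0:ℝ)..x, (1 / ρ1 x) := hconst.symm
      _ ≤ sbTheta ρ1 x := hmono
  have hθ0 : 0 ≤ sbTheta ρ1 x := le_trans (div_nonneg hx0 hMpos.le) hθge
  have hθge' : x ≤ sbTheta ρ1 x * ρ1 x := (div_le_iff₀ hMpos).1 hθge
  have hrho0nn : 0 ≤ sbRho0 ρ1 x := by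
    rw [sbRho0]
    positivity
  have h1 : ‖gradient F w‖ ^ 2 ≤ sbRho0 ρ1 x ^ 2 := by
    rw [sbRho0, mul_pow, Real.sq_sqrt (by positivity)]
    calc ‖gradient F w‖ ^ 2 ≤ 2 * ρ1 x * x := key
      _ ≤ ρ1 x ^ 2 * (2 * sbTheta ρ1 x) := by nlinarith [hMpos.le]
  calc ‖gradient F w‖ = Real.sqrt (‖gradient F w‖ ^ 2) := (Real.sqrt_sq (norm_nonneg _)).symm
    _ ≤ Real.sqrt (sbRho0 ρ1 x ^ 2) := Real.sqrt_le_sqrt h1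
    _ = sbRho0 ρ1 x := Real.sqrt_sq hrho0nn
end

section
/- Under the second-order self-bounding assumption, for all points x, y ∈ E with ‖y − x‖ ≤ 1/ρ0(F(x) + 1), one has F(y) ≤ F(x) + 1. -/
open Set MeasureTheory intervalIntegral Topology Filter
set_option linter.unusedSectionVars false
set_option linter.unusedVariables false
set_option maxHeartbeats 1000000

section theta
variable {ρ1 : ℝ → ℝ} (hρ1mono : MonotoneOn ρ1 (Set.Ici 0))
    (hρ1cont : ContinuousOn ρ1 (Set.Ici 0))
    (hρ1pos : ∀ x ∈ Set.Ici (0 : ℝ), 0 < ρ1 x)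

include hρ1cont hρ1pos

lemma sb_integrable {a b : ℝ} (ha : 0 ≤ a) (hab : a ≤ b) :
    IntervalIntegrable (fun v => 1 / ρ1 v) volume a b := by
  apply ContinuousOn.intervalIntegrable
  rw [uIcc_of_le hab]
  have hsub : Icc a b ⊆ Ici (0:ℝ) := fun v hv => le_trans ha hv.1
  exact continuousOn_const.div (hρ1cont.mono hsub) (fun v hv => (hρ1pos v (hsub hv)).ne')

lemma sbTheta_nonneg {x : ℝ} (hx : 0 ≤ x) : 0 ≤ sbTheta ρ1 x := by
  apply intervalIntegral.integral_nonneg hx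
  intro u hu
  exact le_of_lt (div_pos one_pos (hρ1pos u hu.1))

lemma sbTheta_mono {a b : ℝ} (ha : 0 ≤ a) (hab : a ≤ b) : sbTheta ρ1 a ≤ sbTheta ρ1 b := by
  have h1 := sb_integrable hρ1cont hρ1pos le_rfl ha
  have h2 := sb_integrable hρ1cont hρ1pos ha hab
  have : sbTheta ρ1 b = sbTheta ρ1 a + ∫ v in a..b, 1 / ρ1 v := by
    rw [sbTheta, sbTheta, integral_add_adjacent_intervals h1 h2]
  rw [this]
  have : 0 ≤ ∫ v in a..b, 1 / ρ1 v := by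
    apply intervalIntegral.integral_nonneg hab
    intro u hu
    exact le_of_lt (div_pos one_pos (hρ1pos u (le_trans ha hu.1)))
  linarith

include hρ1mono in
lemma sbTheta_lower {x : ℝ} (hx : 0 ≤ x) : x / ρ1 x ≤ sbTheta ρ1 x := by
  have h1 : IntervalIntegrable (fun _ : ℝ => 1 / ρ1 x) volume 0 x := intervalIntegrable_const
  have h2 := sb_integrable hρ1cont hρ1pos le_rfl hx
  have hmono : ∀ v ∈ Icc (0:ℝ) x, 1 / ρ1 x ≤ 1 / ρ1 v := by
    intro v hv
    exact one_div_le_one_div_of_le (hρ1pos v hv.1) (hρ1mono hv.1 hx hv.2)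
  have := intervalIntegral.integral_mono_on hx h1 h2 hmono
  rw [sbTheta]
  simpa [div_eq_mul_inv, mul_comm] using this

lemma sbRho0_nonneg {x : ℝ} (hx : 0 ≤ x) : 0 ≤ sbRho0 ρ1 x :=
  mul_nonneg (hρ1pos x hx).le (Real.sqrt_nonneg _)

include hρ1mono in
lemma sbRho0_mono {a b : ℝ} (ha : 0 ≤ a) (hab : a ≤ b) : sbRho0 ρ1 a ≤ sbRho0 ρ1 b := by
  apply mul_le_mul (hρ1mono ha (le_trans ha hab) hab)
  · exact Real.sqrt_le_sqrt (by linarith [sbTheta_mono hρ1cont hρ1pos ha hab])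
  · exact Real.sqrt_nonneg _
  · exact (hρ1pos b (le_trans ha hab)).le

include hρ1mono in
lemma sbRho0_pos {x : ℝ} (hx : 0 < x) : 0 < sbRho0 ρ1 x := by
  have hθ : 0 < sbTheta ρ1 x :=
    lt_of_lt_of_le (div_pos hx (hρ1pos x hx.le)) (sbTheta_lower hρ1mono hρ1cont hρ1pos hx.le)
  exact mul_pos (hρ1pos x hx.le) (Real.sqrt_pos.2 (by linarith))

include hρ1mono in
lemma sb_sq_le (x : ℝ) (hx : 0 ≤ x) : 2 * ρ1 x * x ≤ (sbRho0 ρ1 x) ^ 2 := by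
  have hρ := hρ1pos x hx
  have hθnn := sbTheta_nonneg hρ1cont hρ1pos hx
  have hθ := sbTheta_lower hρ1mono hρ1cont hρ1pos hx
  have : (sbRho0 ρ1 x) ^ 2 = ρ1 x ^ 2 * (2 * sbTheta ρ1 x) := by
    rw [sbRho0, mul_pow, Real.sq_sqrt (by linarith)]
  rw [this]
  have : x ≤ ρ1 x * sbTheta ρ1 x := by
    have := (div_le_iff₀ hρ).1 hθ
    linarith [this]
  nlinarith [sq_nonneg (ρ1 x)]

end theta

/-- Continuous induction: if a closed pointwise inequality can always be pushed a bit further,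
it holds on all of `[0, c]`. -/
lemma sb_cont_induction {f b : ℝ → ℝ} {c : ℝ} (hc : 0 ≤ c)
    (hf : ContinuousOn f (Icc 0 c)) (hb : ContinuousOn b (Icc 0 c))
    (h0 : f 0 ≤ b 0)
    (step : ∀ T, T ∈ Ico (0:ℝ) c → (∀ s ∈ Icc (0:ℝ) T, f s ≤ b s) →
      ∃ δ > 0, T + δ ≤ c ∧ ∀ s ∈ Icc (0:ℝ) (T + δ), f s ≤ b s) :
    ∀ s ∈ Icc (0:ℝ) c, f s ≤ b s := by
  set A : Set ℝ := {t | t ∈ Icc 0 c ∧ ∀ s ∈ Icc (0:ℝ) t, f s ≤ b s} with hA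
  have mem0 : (0:ℝ) ∈ A := by
    refine ⟨⟨le_rfl, hc⟩, ?_⟩
    intro s hs
    have : s = 0 := le_antisymm hs.2 hs.1
    rwa [this]
  have hbdd : BddAbove A := ⟨c, fun t ht => ht.1.2⟩
  set T := sSup A with hT
  have hT0 : 0 ≤ T := le_csSup hbdd mem0
  have hTc : T ≤ c := csSup_le ⟨0, mem0⟩ (fun t ht => ht.1.2)
  have hTIcc : T ∈ Icc (0:ℝ) c := ⟨hT0, hTc⟩
  -- every s < T is dominated
  have hlt : ∀ s, 0 ≤ s → s < T → f s ≤ b s := by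
    intro s hs0 hsT
    obtain ⟨t, htA, hst⟩ := exists_lt_of_lt_csSup ⟨0, mem0⟩ hsT
    exact htA.2 s ⟨hs0, hst.le⟩
  -- the inequality holds at T
  have hatT : f T ≤ b T := by
    rcases eq_or_lt_of_le hT0 with h|h
    · rw [← h]; exact h0
    · have hne : (𝓝[Ioo 0 T] T).NeBot := by
        rw [← mem_closure_iff_nhdsWithin_neBot, closure_Ioo h.ne]
        exact ⟨hT0, le_rfl⟩
      have hsub : Ioo (0:ℝ) T ⊆ Icc 0 c := fun s hs => ⟨hs.1.le, le_trans hs.2.le hTc⟩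
      have h1 : Filter.Tendsto (fun s => f s - b s) (𝓝[Ioo 0 T] T) (𝓝 (f T - b T)) :=
        ((hf.sub hb) T hTIcc).tendsto.mono_left (nhdsWithin_mono T hsub)
      have h2 : ∀ᶠ s in 𝓝[Ioo 0 T] T, f s - b s ≤ 0 := by
        filter_upwards [self_mem_nhdsWithin] with s hs
        linarith [hlt s hs.1.le hs.2]
      linarith [le_of_tendsto h1 h2]
  have hTA : T ∈ A := by
    refine ⟨hTIcc, ?_⟩
    intro s hs
    rcases eq_or_lt_of_le hs.2 with h|h
    · rwa [h]
    · exact hlt s hs.1 h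
  have hTeqc : T = c := by
    by_contra hne
    obtain ⟨δ, hδ, hδc, hδall⟩ := step T ⟨hT0, lt_of_le_of_ne hTc hne⟩ hTA.2
    have : T + δ ∈ A := ⟨⟨by linarith, hδc⟩, hδall⟩
    have := le_csSup hbdd this
    linarith
  intro s hs
  exact hTA.2 s ⟨hs.1, hTeqc ▸ hs.2⟩

section line
variable {E : Type*} [NormedAddCommGroup E] [NormedSpace ℝ E]
variable {F : E → ℝ} (hF : ContDiff ℝ 2 F) (x v : E)

lemma sb_gamma_deriv (t : ℝ) : HasDerivAt (fun s : ℝ => x + s • v) v t := by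
  simpa using ((hasDerivAt_id t).smul_const v).const_add x

include hF in
lemma sb_line_deriv1 (t : ℝ) :
    HasDerivAt (fun s : ℝ => F (x + s • v)) (fderiv ℝ F (x + t • v) v) t :=
  (hF.differentiable (by norm_num) (x + t • v)).hasFDerivAt.comp_hasDerivAt t
    (sb_gamma_deriv x v t)

include hF in
lemma sb_line_deriv2 (t : ℝ) :
    HasDerivAt (fun s : ℝ => fderiv ℝ F (x + s • v) v)
      ((fderiv ℝ (fderiv ℝ F) (x + t • v) v) v) t := by
  have hF1 : ContDiff ℝ 1 (fderiv ℝ F) := hF.fderiv_right (by norm_num)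
  have h1 : HasDerivAt (fun s : ℝ => fderiv ℝ F (x + s • v))
      (fderiv ℝ (fderiv ℝ F) (x + t • v) v) t :=
    (hF1.differentiable (by norm_num) (x + t • v)).hasFDerivAt.comp_hasDerivAt t
      (sb_gamma_deriv x v t)
  simpa using h1.clm_apply (hasDerivAt_const t v)

include hF in
lemma sb_line_cont1 : Continuous (fun s : ℝ => fderiv ℝ F (x + s • v) v) := by
  have hF1 : ContDiff ℝ 1 (fderiv ℝ F) := hF.fderiv_right (by norm_num)
  exact (hF1.continuous.comp (by continuity)).clm_apply continuous_const

end line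

/-- Second-order Taylor-type bound from a derivative bound on `[0, T]`. -/
lemma sb_taylor_bound {h h' h'' : ℝ → ℝ} {m T : ℝ} (hT : 0 ≤ T)
    (hd1 : ∀ s, HasDerivAt h (h' s) s) (hd2 : ∀ s, HasDerivAt h' (h'' s) s)
    (hm : ∀ s ∈ Icc (0:ℝ) T, |h'' s| ≤ m) :
    h T ≤ h 0 + h' 0 * T + m * T ^ 2 / 2 := by
  have step1 : ∀ s ∈ Icc (0:ℝ) T, h' s ≤ h' 0 + m * s := by
    intro s hs
    have := Convex.norm_image_sub_le_of_norm_hasDerivWithin_le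
      (f := h') (f' := h'') (s := Icc (0:ℝ) T)
      (fun z hz => (hd2 z).hasDerivWithinAt) (fun z hz => hm z hz) (convex_Icc 0 T)
      (left_mem_Icc.2 hT) hs
    rw [Real.norm_eq_abs, Real.norm_eq_abs, sub_zero] at this
    have habs := (abs_le.1 this).2
    rw [abs_of_nonneg hs.1] at habs
    linarith
  -- φ is antitone
  set φ : ℝ → ℝ := fun s => h s - h' 0 * s - m * s ^ 2 / 2 with hφ
  have hφd : ∀ s, HasDerivAt φ (h' s - h' 0 - m * s) s := by
    intro s
    have h1 : HasDerivAt (fun s : ℝ => h' 0 * s) (h' 0) s := by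
      simpa using (hasDerivAt_id s).const_mul (h' 0)
    have h2 : HasDerivAt (fun s : ℝ => m * s ^ 2 / 2) (m * s) s := by
      have := (hasDerivAt_pow 2 s).const_mul (m / 2)
      have h3 : HasDerivAt (fun s : ℝ => m / 2 * s ^ 2) (m * s) s := by
        exact this.congr_deriv (by ring)
      convert h3 using 2 with s; ring
    exact ((hd1 s).sub h1).sub h2
  have hanti : AntitoneOn φ (Icc (0:ℝ) T) := by
    apply antitoneOn_of_deriv_nonpos (convex_Icc 0 T)
    · exact Continuous.continuousOn
        (continuous_iff_continuousAt.2 fun s => (hφd s).differentiableAt.continuousAt)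
    · intro s hs
      exact (hφd s).differentiableAt.differentiableWithinAt
    · intro s hs
      rw [(hφd s).deriv]
      rw [interior_Icc] at hs
      have := step1 s ⟨hs.1.le, hs.2.le⟩
      linarith
  have := hanti (left_mem_Icc.2 hT) (right_mem_Icc.2 hT) hT
  simp only [hφ] at this
  nlinarith [this]

section grad

lemma sb_grad_bound {d : ℕ} {F : EuclideanSpace ℝ (Fin d) → ℝ}
    (hF : ContDiff ℝ 2 F) (hFnn : ∀ w, 0 ≤ F w)
    {ρ1 : ℝ → ℝ} (hρ1mono : MonotoneOn ρ1 (Set.Ici 0))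
    (hρ1cont : ContinuousOn ρ1 (Set.Ici 0))
    (hρ1pos : ∀ x ∈ Set.Ici (0 : ℝ), 0 < ρ1 x)
    (hbound : ∀ w, ‖fderiv ℝ (fderiv ℝ F) w‖ ≤ ρ1 (F w))
    (w : EuclideanSpace ℝ (Fin d)) :
    ‖fderiv ℝ F w‖ ^ 2 ≤ 2 * ρ1 (F w) * F w := by
  set L := fderiv ℝ F w with hL
  set G := ‖L‖ with hG
  have hG0 : 0 ≤ G := norm_nonneg _
  set m := ρ1 (F w) with hm
  have hmpos : 0 < m := hρ1pos _ (hFnn w)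
  rcases eq_or_lt_of_le hG0 with hGz | hGpos
  · rw [← hGz]; have h1 := hFnn w; nlinarith
  -- norming direction
  set z := (InnerProductSpace.toDual ℝ (EuclideanSpace ℝ (Fin d))).symm L with hzdef
  have hznorm : ‖z‖ = G := (InnerProductSpace.toDual ℝ (EuclideanSpace ℝ (Fin d))).symm.norm_map L
  set u := (-G⁻¹) • z with hu
  have hunorm : ‖u‖ = 1 := by
    rw [hu, norm_smul, hznorm, norm_neg, norm_inv, Real.norm_eq_abs, abs_of_pos hGpos]
    field_simp
  have hLz : L z = G ^ 2 := by
    have : @inner ℝ _ _ z z = L z := InnerProductSpace.toDual_symm_apply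
    rw [← this, real_inner_self_eq_norm_sq, hznorm]
  have hLu : L u = -G := by
    rw [hu, _root_.map_smul, smul_eq_mul, hLz]
    field_simp
  -- the line functions
  set h : ℝ → ℝ := fun t => F (w + t • u) with hh
  set h' : ℝ → ℝ := fun t => fderiv ℝ F (w + t • u) u with hh'
  set h'' : ℝ → ℝ := fun t => (fderiv ℝ (fderiv ℝ F) (w + t • u) u) u with hh''
  have hd1 : ∀ t, HasDerivAt h (h' t) t := sb_line_deriv1 hF w u
  have hd2 : ∀ t, HasDerivAt h' (h'' t) t := sb_line_deriv2 hF w u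
  have hcont : Continuous h := continuous_iff_continuousAt.2
    fun s => (hd1 s).differentiableAt.continuousAt
  have hcont' : Continuous h' := sb_line_cont1 hF w u
  have hh0 : h 0 = F w := by simp [hh]
  have hh'0 : h' 0 = -G := by
    simp only [hh', zero_smul, add_zero]
    exact hLu
  have hhnn : ∀ t, 0 ≤ h t := fun t => hFnn _
  have hbnd : ∀ t, |h'' t| ≤ ρ1 (h t) := by
    intro t
    have h1 : |h'' t| ≤ ‖fderiv ℝ (fderiv ℝ F) (w + t • u) u‖ * ‖u‖ := by
      rw [hh'']
      exact (fderiv ℝ (fderiv ℝ F) (w + t • u) u).le_opNorm u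
    have h2 : ‖fderiv ℝ (fderiv ℝ F) (w + t • u) u‖ ≤ ‖fderiv ℝ (fderiv ℝ F) (w + t • u)‖ * ‖u‖ :=
      ContinuousLinearMap.le_opNorm _ u
    rw [hunorm, mul_one] at h1 h2
    exact h1.trans (h2.trans (hbound _))
  set t₀ := G / m with ht₀
  have ht₀pos : 0 < t₀ := div_pos hGpos hmpos
  -- main claim by continuous induction
  have key : ∀ s ∈ Icc (0:ℝ) t₀, h s ≤ F w := by
    apply sb_cont_induction ht₀pos.le hcont.continuousOn continuousOn_const
      (by rw [hh0])
    intro T hT hprev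
    have hmT : ∀ s ∈ Icc (0:ℝ) T, |h'' s| ≤ m :=
      fun s hs => (hbnd s).trans (hρ1mono (hhnn s) (hFnn w) (hprev s hs))
    rcases eq_or_lt_of_le hT.1 with hT0 | hT0
    · -- T = 0 : use h' 0 = -G < 0
      have hev : ∀ᶠ s in 𝓝 (0:ℝ), h' s < 0 := by
        have : h' 0 < 0 := by rw [hh'0]; linarith
        exact (hcont'.tendsto 0).eventually_lt_const this |>.mono (fun s hs => hs)
      rw [Metric.eventually_nhds_iff] at hev
      obtain ⟨ε, hε, hball⟩ := hev
      refine ⟨min (ε/2) t₀, by positivity, ?_, ?_⟩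
      · rw [← hT0]; simp [ht₀pos.le]
      · rw [← hT0, zero_add]
        set δ := min (ε/2) t₀ with hδ
        have hanti : AntitoneOn h (Icc 0 δ) := by
          apply antitoneOn_of_deriv_nonpos (convex_Icc 0 δ) hcont.continuousOn
          · intro s hs
            exact (hd1 s).differentiableAt.differentiableWithinAt
          · intro s hs
            rw [interior_Icc] at hs
            rw [(hd1 s).deriv]
            have : dist s 0 < ε := by
              rw [Real.dist_eq, sub_zero, abs_of_pos hs.1]
              calc s < δ := hs.2
                _ ≤ ε/2 := min_le_left _ _
                _ < ε := by linarith
            exact (hball this).le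
        intro s hs
        calc h s ≤ h 0 := hanti (left_mem_Icc.2 (le_min (by positivity) ht₀pos.le)) hs hs.1
          _ = F w := hh0
    · -- 0 < T : Taylor bound gives strict decrease
      have htay := sb_taylor_bound hT.1 hd1 hd2 hmT
      rw [hh0, hh'0] at htay
      have hTlt : T < t₀ := hT.2
      have hstrict : h T < F w := by
        have hmTG : m * T < G := by
          rw [ht₀] at hTlt
          calc m * T = T * m := mul_comm _ _
            _ < G := (lt_div_iff₀ hmpos).1 hTlt
        nlinarith
      have hev : ∀ᶠ s in 𝓝 T, h s < F w :=
        (hcont.tendsto T).eventually_lt_const hstrict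
      rw [Metric.eventually_nhds_iff] at hev
      obtain ⟨ε, hε, hball⟩ := hev
      refine ⟨min (ε/2) (t₀ - T), lt_min (by positivity) (by linarith), ?_, ?_⟩
      · have : min (ε/2) (t₀ - T) ≤ t₀ - T := min_le_right _ _
        linarith
      · intro s hs
        rcases le_or_gt s T with hsT | hsT
        · exact hprev s ⟨hs.1, hsT⟩
        · have : dist s T < ε := by
            rw [Real.dist_eq, abs_of_pos (by linarith : (0:ℝ) < s - T)]
            have := hs.2
            have h1 : min (ε/2) (t₀ - T) ≤ ε/2 := min_le_left _ _
            linarith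
          exact (hball this).le
  -- conclude
  have hmall : ∀ s ∈ Icc (0:ℝ) t₀, |h'' s| ≤ m :=
    fun s hs => (hbnd s).trans (hρ1mono (hhnn s) (hFnn w) (key s hs))
  have htay := sb_taylor_bound ht₀pos.le hd1 hd2 hmall
  rw [hh0, hh'0] at htay
  have hfinal : 0 ≤ F w + (-G) * t₀ + m * t₀ ^ 2 / 2 := le_trans (hhnn t₀) htay
  rw [ht₀] at hfinal
  have hq : F w + (-G) * (G / m) + m * (G / m) ^ 2 / 2 = F w - G ^ 2 / (2 * m) := by
    field_simp
    ring
  rw [hq] at hfinal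
  have h2 : G ^ 2 / (2 * m) ≤ F w := by linarith
  have h3 := mul_le_mul_of_nonneg_right h2 (by positivity : (0:ℝ) ≤ 2 * m)
  rw [div_mul_cancel₀ _ (by positivity : (0:ℝ) < 2 * m).ne'] at h3
  calc G ^ 2 ≤ F w * (2 * m) := h3
    _ = 2 * m * F w := by ring

end grad

/-- Under the second-order self-bounding assumption, if `‖y − x‖ ≤ 1/ρ0(F(x) + 1)`
then `F(y) ≤ F(x) + 1`. -/
theorem funcvalue_control_of_selfbounding (d : ℕ) (hd : 1 ≤ d)
    (F : EuclideanSpace ℝ (Fin d) → ℝ)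
    (hF : ContDiff ℝ 2 F) (hFnn : ∀ w, 0 ≤ F w)
    (ρ1 : ℝ → ℝ) (hρ1mono : MonotoneOn ρ1 (Set.Ici 0))
    (hρ1cont : ContinuousOn ρ1 (Set.Ici 0))
    (hρ1pos : ∀ x ∈ Set.Ici (0 : ℝ), 0 < ρ1 x)
    (hbound : ∀ w, ‖fderiv ℝ (fderiv ℝ F) w‖ ≤ ρ1 (F w)) :
    ∀ x y : EuclideanSpace ℝ (Fin d),
      ‖y - x‖ ≤ 1 / sbRho0 ρ1 (F x + 1) → F y ≤ F x + 1 := by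
  intro x y hxy
  set B := F x + 1 with hB
  have hBpos : 0 < B := by have := hFnn x; rw [hB]; linarith
  set v := y - x with hv
  set r := ‖v‖ with hr
  have hr0 : 0 ≤ r := norm_nonneg _
  have hρ0Bpos : 0 < sbRho0 ρ1 B := sbRho0_pos hρ1mono hρ1cont hρ1pos hBpos
  have hrρ : r * sbRho0 ρ1 B ≤ 1 := (le_div_iff₀ hρ0Bpos).1 hxy
  -- gradient bound
  have hgradle : ∀ w, ‖fderiv ℝ F w‖ ≤ sbRho0 ρ1 (F w) := by
    intro w
    have h1 := sb_grad_bound hF hFnn hρ1mono hρ1cont hρ1pos hbound w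
    have h2 := sb_sq_le hρ1mono hρ1cont hρ1pos (F w) (hFnn w)
    have h3 : ‖fderiv ℝ F w‖ ^ 2 ≤ (sbRho0 ρ1 (F w)) ^ 2 := h1.trans h2
    have h4 := sbRho0_nonneg hρ1cont hρ1pos (hFnn w)
    calc ‖fderiv ℝ F w‖ = Real.sqrt (‖fderiv ℝ F w‖ ^ 2) :=
          (Real.sqrt_sq (norm_nonneg _)).symm
      _ ≤ Real.sqrt ((sbRho0 ρ1 (F w)) ^ 2) := Real.sqrt_le_sqrt h3
      _ = sbRho0 ρ1 (F w) := Real.sqrt_sq h4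
  -- the line function
  set g : ℝ → ℝ := fun t => F (x + t • v) with hg
  set g' : ℝ → ℝ := fun t => fderiv ℝ F (x + t • v) v with hg'
  have hd1 : ∀ t, HasDerivAt g (g' t) t := sb_line_deriv1 hF x v
  have hcont : Continuous g := continuous_iff_continuousAt.2
    fun s => (hd1 s).differentiableAt.continuousAt
  have hg0 : g 0 = F x := by simp [hg]
  have hg1 : g 1 = F y := by simp [hg, hv]
  have key : ∀ s ∈ Icc (0:ℝ) 1, g s ≤ F x + s := by
    apply sb_cont_induction (b := fun s => F x + s) zero_le_one hcont.continuousOn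
      (Continuous.continuousOn (by fun_prop)) (by simp [hg0])
    intro T hT hprev
    have hgTB : g T < B := by
      have := hprev T ⟨hT.1, le_rfl⟩
      have := hT.2
      rw [hB]; linarith
    have hev : ∀ᶠ s in 𝓝 T, g s < B := (hcont.tendsto T).eventually_lt_const hgTB
    rw [Metric.eventually_nhds_iff] at hev
    obtain ⟨ε, hε, hball⟩ := hev
    refine ⟨min (ε/2) (1 - T), lt_min (by positivity) (by linarith [hT.2]), ?_, ?_⟩
    · have : min (ε/2) (1 - T) ≤ 1 - T := min_le_right _ _
      linarith
    · set δ := min (ε/2) (1 - T) with hδ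
      have hTδ1 : T + δ ≤ 1 := by
        have : δ ≤ 1 - T := min_le_right _ _
        linarith
      have hgB : ∀ s ∈ Icc (0:ℝ) (T + δ), g s ≤ B := by
        intro s hs
        rcases le_or_gt s T with hsT | hsT
        · have := hprev s ⟨hs.1, hsT⟩
          have hs1 : s ≤ 1 := by linarith [hTδ1, hs.2]
          rw [hB]; linarith
        · have : dist s T < ε := by
            rw [Real.dist_eq, abs_of_pos (by linarith : (0:ℝ) < s - T)]
            have h1 : δ ≤ ε/2 := min_le_left _ _
            linarith [hs.2]
          exact (hball this).le
      have hC : ∀ s ∈ Icc (0:ℝ) (T + δ), ‖g' s‖ ≤ 1 := by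
        intro s hs
        have h1 : ‖g' s‖ ≤ ‖fderiv ℝ F (x + s • v)‖ * r := by
          rw [hg', hr]
          exact (fderiv ℝ F (x + s • v)).le_opNorm v
        have h2 : ‖fderiv ℝ F (x + s • v)‖ ≤ sbRho0 ρ1 B := by
          refine (hgradle _).trans (sbRho0_mono hρ1mono hρ1cont hρ1pos (hFnn _) ?_)
          exact hgB s hs
        calc ‖g' s‖ ≤ ‖fderiv ℝ F (x + s • v)‖ * r := h1
          _ ≤ sbRho0 ρ1 B * r := mul_le_mul_of_nonneg_right h2 hr0
          _ = r * sbRho0 ρ1 B := mul_comm _ _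
          _ ≤ 1 := hrρ
      intro s hs
      have := Convex.norm_image_sub_le_of_norm_hasDerivWithin_le
        (f := g) (f' := g') (s := Icc (0:ℝ) (T + δ))
        (fun z hz => (hd1 z).hasDerivWithinAt) hC (convex_Icc _ _)
        (left_mem_Icc.2 (by linarith [hs.1, hs.2] : (0:ℝ) ≤ T + δ)) hs
      rw [Real.norm_eq_abs, Real.norm_eq_abs, sub_zero, one_mul, hg0,
        abs_of_nonneg hs.1] at this
      have := (abs_le.1 this).2
      linarith
  have := key 1 ⟨zero_le_one, le_rfl⟩
  rw [hg1] at this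
  linarith
end

section
/- Under the second-order self-bounding assumption, fix w0 ∈ E and ε > 0, set L1(w0) = max{1, ρ0(F(w0)+1), ρ0(F(w0))·ρ0(F(w0)+1), ρ1(F(w0)+1)} and η = 1/L1(w0), and define gradient-descent iterates by w_{t+1} = w_t − η·∇F(w_t) starting from w0. Then there exists a natural number t with t ≤ 2·F(w0)·L1(w0)/ε² such that ‖∇F(w_t)‖ ≤ ε. -/
open InnerProductSpace Set

section Aux

variable {E : Type*} [NormedAddCommGroup E] [InnerProductSpace ℝ E] [CompleteSpace E]

local notation "⟪" x ", " y "⟫" => @inner ℝ _ _ x y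

lemma fderiv_apply_eq_inner_gradient (F : E → ℝ) (p v : E) :
    fderiv ℝ F p v = ⟪gradient F p, v⟫ := by
  rw [gradient, ← InnerProductSpace.toDual_apply_apply, LinearIsometryEquiv.apply_symm_apply]

/-- Descent step lemma: one gradient step with stepsize `1/L` decreases `F` by
`‖∇F‖²/(2L)`, provided the Hessian is bounded by `L` on the sublevel set `{F ≤ c}`
and `F p < c`. -/
lemma descent_step (F : E → ℝ) (hF : ContDiff ℝ 2 F) (L c : ℝ) (hL : 0 < L)
    (hHess : ∀ q, F q ≤ c → ‖fderiv ℝ (fderiv ℝ F) q‖ ≤ L)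
    (p : E) (hp : F p < c) :
    F (p - (1 / L) • gradient F p) ≤ F p - ‖gradient F p‖ ^ 2 / (2 * L) := by
  set g := gradient F p with hg
  set v : E := -((1 / L) • g) with hv
  have hFdiff : Differentiable ℝ F := hF.differentiable two_ne_zero
  have hF'diff : Differentiable ℝ (fderiv ℝ F) :=
    (hF.fderiv_right (m := 1) le_rfl).differentiable one_ne_zero
  set γ : ℝ → E := fun s => p + s • v with hγ
  have hγcont : Continuous γ := by fun_prop
  have hγ0 : γ 0 = p := by simp [hγ]
  have hder : ∀ s : ℝ, HasDerivAt (fun r => F (γ r)) (fderiv ℝ F (γ s) v) s := by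
    intro s
    have hline : HasDerivAt γ v s := by
      simpa [hγ] using ((hasDerivAt_id s).smul_const v).const_add p
    exact (hFdiff (γ s)).hasFDerivAt.comp_hasDerivAt s hline
  have hKv : fderiv ℝ F p v = -(‖g‖ ^ 2 / L) := by
    rw [fderiv_apply_eq_inner_gradient, hv, inner_neg_right, real_inner_smul_right,
      real_inner_self_eq_norm_sq]
    field_simp
    rw [hg]
  have hvnorm : ‖v‖ ^ 2 = ‖g‖ ^ 2 / L ^ 2 := by
    rw [hv, norm_neg, norm_smul, Real.norm_eq_abs,
      abs_of_pos (by positivity : (0:ℝ) < 1 / L), mul_pow]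
    field_simp
  have hquad : ∀ s ∈ Icc (0 : ℝ) 1,
      F p + s * fderiv ℝ F p v + L * ‖v‖ ^ 2 * s ^ 2 / 2
        ≤ F p - s ^ 2 * (‖g‖ ^ 2 / (2 * L)) := by
    intro s hs
    rw [hKv, hvnorm]
    have h1 : L * (‖g‖ ^ 2 / L ^ 2) = ‖g‖ ^ 2 / L := by
      field_simp
    rw [h1]
    have hs2 : s ^ 2 ≤ s := by nlinarith [hs.1, hs.2]
    have hgl : 0 ≤ ‖g‖ ^ 2 / L := by positivity
    have h2 : ‖g‖ ^ 2 / (2 * L) = (‖g‖ ^ 2 / L) / 2 := by ring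
    rw [h2]
    nlinarith
  -- Step A: Taylor bound under sublevel invariant
  have stepA : ∀ s ∈ Icc (0 : ℝ) 1, (∀ r ∈ Icc (0 : ℝ) s, F (γ r) ≤ c) →
      F (γ s) ≤ F p + s * fderiv ℝ F p v + L * ‖v‖ ^ 2 * s ^ 2 / 2 := by
    intro s hs hinv
    set S : Set E := γ '' Icc 0 s with hS
    have hconv : Convex ℝ S := by
      have : S = (AffineMap.lineMap p (p + v) : ℝ →ᵃ[ℝ] E) '' Icc 0 s := by
        apply image_congr
        intro r _
        simp only [AffineMap.lineMap_apply, hγ, vsub_eq_sub, add_sub_cancel_left,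
          vadd_eq_add]
        abel
      rw [this]
      exact (convex_Icc 0 s).affine_image _
    have hmem0 : p ∈ S := ⟨0, ⟨le_refl 0, hs.1⟩, hγ0⟩
    have hlip : ∀ r ∈ Icc (0 : ℝ) s,
        fderiv ℝ F (γ r) v ≤ fderiv ℝ F p v + L * ‖v‖ ^ 2 * r := by
      intro r hr
      have hmem : γ r ∈ S := ⟨r, hr, rfl⟩
      have hbdd : ‖fderiv ℝ F (γ r) - fderiv ℝ F p‖ ≤ L * ‖γ r - p‖ :=
        Convex.norm_image_sub_le_of_norm_fderiv_le (fun q _ => hF'diff q)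
          (fun q hq => by
            obtain ⟨r', hr', rfl⟩ := hq
            exact hHess _ (hinv r' hr')) hconv hmem0 hmem
      have hdist : ‖γ r - p‖ = r * ‖v‖ := by
        simp [hγ, norm_smul, abs_of_nonneg hr.1]
      have happ : fderiv ℝ F (γ r) v - fderiv ℝ F p v
          = (fderiv ℝ F (γ r) - fderiv ℝ F p) v := by simp
      have hb2 : fderiv ℝ F (γ r) v - fderiv ℝ F p v ≤ L * ‖v‖ ^ 2 * r := by
        rw [happ]
        calc (fderiv ℝ F (γ r) - fderiv ℝ F p) v
            ≤ ‖(fderiv ℝ F (γ r) - fderiv ℝ F p) v‖ := le_abs_self _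
          _ ≤ ‖fderiv ℝ F (γ r) - fderiv ℝ F p‖ * ‖v‖ :=
              (fderiv ℝ F (γ r) - fderiv ℝ F p).le_opNorm v
          _ ≤ (L * (r * ‖v‖)) * ‖v‖ := by
              rw [← hdist]
              exact mul_le_mul_of_nonneg_right hbdd (norm_nonneg v)
          _ = L * ‖v‖ ^ 2 * r := by ring
      linarith
    -- integrate the derivative bound
    set K := fderiv ℝ F p v with hK
    set C := L * ‖v‖ ^ 2 / 2 with hC
    set u : ℝ → ℝ := fun r => F (γ r) - F p - r * K - C * r ^ 2 with hu
    have huder : ∀ r : ℝ, HasDerivAt u (fderiv ℝ F (γ r) v - K - C * (2 * r)) r := by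
      intro r
      have h1 : HasDerivAt (fun r : ℝ => r * K) K r := hasDerivAt_mul_const K
      have h2 : HasDerivAt (fun r : ℝ => C * r ^ 2) (C * (2 * r ^ 1)) r :=
        (hasDerivAt_pow 2 r).const_mul C
      have := (((hder r).sub_const (F p)).sub h1).sub h2
      simp only [pow_one] at this; exact this
    have hanti : AntitoneOn u (Icc 0 s) := by
      apply antitoneOn_of_deriv_nonpos (convex_Icc 0 s)
      · exact fun r _ => ((huder r).continuousAt).continuousWithinAt
      · exact fun r _ => ((huder r).differentiableAt).differentiableWithinAt
      · intro r hr
        rw [interior_Icc] at hr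
        rw [(huder r).deriv]
        have := hlip r ⟨hr.1.le, hr.2.le⟩
        have hC2 : C * (2 * r) = L * ‖v‖ ^ 2 * r := by rw [hC]; ring
        linarith [hC2 ▸ this]
    have hus : u s ≤ u 0 := hanti ⟨le_refl 0, hs.1⟩ ⟨hs.1, le_refl s⟩ hs.1
    have hu0 : u 0 = 0 := by simp [hu, hγ0]
    rw [hu0] at hus
    have : F (γ s) - F p - s * K - C * s ^ 2 ≤ 0 := hus
    rw [hK] at this
    have hCs : C * s ^ 2 = L * ‖v‖ ^ 2 * s ^ 2 / 2 := by rw [hC]; ring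
    linarith [hCs ▸ this]
  -- Step B: the sublevel invariant holds up to time 1
  have stepB : ∀ r ∈ Icc (0 : ℝ) 1, F (γ r) ≤ c := by
    by_contra hcon
    push_neg at hcon
    set A : Set ℝ := {s ∈ Icc (0 : ℝ) 1 | ∀ r ∈ Icc (0 : ℝ) s, F (γ r) ≤ c} with hA
    have h0A : (0 : ℝ) ∈ A := by
      refine ⟨⟨le_refl 0, zero_le_one⟩, ?_⟩
      intro r hr
      have : r = 0 := le_antisymm hr.2 hr.1
      rw [this, hγ0]
      exact hp.le
    have hAbdd : BddAbove A := ⟨1, fun x hx => hx.1.2⟩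
    set T := sSup A with hT
    have hTmem : T ∈ Icc (0 : ℝ) 1 :=
      ⟨le_csSup hAbdd h0A, csSup_le ⟨0, h0A⟩ (fun x hx => hx.1.2)⟩
    have hTA : T ∈ A := by
      refine ⟨hTmem, ?_⟩
      intro r hr
      rcases lt_or_eq_of_le hr.2 with h | h
      · obtain ⟨s', hs'A, hs'⟩ := exists_lt_of_lt_csSup ⟨0, h0A⟩ h
        exact hs'A.2 r ⟨hr.1, hs'.le⟩
      · -- r = T : limit argument
        rw [h]
        rcases eq_or_lt_of_le hTmem.1 with h0 | h0
        · rw [← h0, hγ0]; exact hp.le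
        · have htend : Filter.Tendsto (fun x => F (γ x)) (nhdsWithin T (Iio T))
              (nhds (F (γ T))) :=
            ((hFdiff.continuous.comp hγcont).tendsto T).mono_left nhdsWithin_le_nhds
          refine le_of_tendsto htend ?_
          have hIoi : Ioi (0:ℝ) ∈ nhdsWithin T (Iio T) :=
            nhdsWithin_le_nhds (Ioi_mem_nhds h0)
          filter_upwards [hIoi, self_mem_nhdsWithin] with x hx0 hxT
          obtain ⟨s', hs'A, hs'⟩ := exists_lt_of_lt_csSup ⟨0, h0A⟩ hxT
          exact hs'A.2 x ⟨le_of_lt hx0, hs'.le⟩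
    have hT1 : T < 1 := by
      rcases lt_or_eq_of_le hTmem.2 with h | h
      · exact h
      · exfalso
        obtain ⟨r0, hr0, hr0c⟩ := hcon
        exact absurd (hTA.2 r0 (h ▸ hr0)) (not_le.mpr hr0c)
    -- F (γ T) < c strictly, extend past T
    have hFT : F (γ T) < c := by
      have := stepA T hTmem hTA.2
      have hq := hquad T hTmem
      have hnn : 0 ≤ T ^ 2 * (‖g‖ ^ 2 / (2 * L)) := by positivity
      linarith
    have hcont : Filter.Tendsto (fun x => F (γ x)) (nhds T) (nhds (F (γ T))) :=
      (hFdiff.continuous.comp hγcont).tendsto T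
    have hev : ∀ᶠ x in nhds T, F (γ x) < c := hcont.eventually_lt_const hFT
    obtain ⟨δ, hδpos, hδ⟩ := Metric.eventually_nhds_iff.mp hev
    set T' : ℝ := min (T + δ / 2) 1 with hT'
    have hT'A : T' ∈ A := by
      refine ⟨⟨le_min (by linarith [hTmem.1]) zero_le_one, min_le_right _ _⟩, ?_⟩
      intro r hr
      rcases le_or_gt r T with h | h
      · exact hTA.2 r ⟨hr.1, h⟩
      · apply le_of_lt
        apply hδ
        rw [Real.dist_eq, abs_of_pos (by linarith)]
        have : r ≤ T + δ / 2 := le_trans hr.2 (min_le_left _ _)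
        linarith
    have h1 : T' ≤ T := le_csSup hAbdd hT'A
    have h2 : T < T' := lt_min (by linarith) hT1
    linarith
  -- conclude
  have h1 : γ 1 = p - (1 / L) • g := by
    simp [hγ, hv, sub_eq_add_neg]
  have := stepA 1 ⟨zero_le_one, le_refl 1⟩ (fun r hr => stepB r hr)
  have hq := hquad 1 ⟨zero_le_one, le_refl 1⟩
  rw [h1] at this
  have : F (p - (1 / L) • g) ≤ F p - 1 ^ 2 * (‖g‖ ^ 2 / (2 * L)) := le_trans this hq
  simpa using this
end Aux

/-- Gradient descent with step size `1/L1(w0)` started at `w0` finds an `ε`-stationary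
point within `2 F(w0) L1(w0) / ε²` iterations, under the second-order self-bounding
assumption. -/
theorem gd_finds_fosp_of_selfbounding (d : ℕ) (hd : 1 ≤ d)
    (F : EuclideanSpace ℝ (Fin d) → ℝ)
    (hF : ContDiff ℝ 2 F) (hFnn : ∀ w, 0 ≤ F w)
    (ρ1 : ℝ → ℝ) (hρ1mono : MonotoneOn ρ1 (Set.Ici 0))
    (hρ1cont : ContinuousOn ρ1 (Set.Ici 0))
    (hρ1pos : ∀ x ∈ Set.Ici (0 : ℝ), 0 < ρ1 x)
    (hbound : ∀ w, ‖fderiv ℝ (fderiv ℝ F) w‖ ≤ ρ1 (F w))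
    (w0 : EuclideanSpace ℝ (Fin d)) (ε : ℝ) (hε : 0 < ε)
    (L1w0 : ℝ)
    (hL1w0 : L1w0 = max (max 1 (sbRho0 ρ1 (F w0 + 1)))
      (max (sbRho0 ρ1 (F w0) * sbRho0 ρ1 (F w0 + 1)) (ρ1 (F w0 + 1))))
    (w : ℕ → EuclideanSpace ℝ (Fin d)) (hw0 : w 0 = w0)
    (hrec : ∀ t, w (t + 1) = w t - (1 / L1w0) • gradient F (w t)) :
    ∃ t : ℕ, (t : ℝ) ≤ 2 * F w0 * L1w0 / ε ^ 2 ∧ ‖gradient F (w t)‖ ≤ ε := by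
  have hL1 : 1 ≤ L1w0 := by
    rw [hL1w0]
    exact le_trans (le_max_left 1 _) (le_max_left _ _)
  have hLpos : 0 < L1w0 := lt_of_lt_of_le one_pos hL1
  have hρL : ρ1 (F w0 + 1) ≤ L1w0 := by
    rw [hL1w0]
    exact le_trans (le_max_right _ _) (le_max_right _ _)
  have hHess : ∀ q, F q ≤ F w0 + 1 → ‖fderiv ℝ (fderiv ℝ F) q‖ ≤ L1w0 := by
    intro q hq
    refine (hbound q).trans (le_trans ?_ hρL)
    exact hρ1mono (Set.mem_Ici.mpr (hFnn q)) (Set.mem_Ici.mpr (by linarith [hFnn w0])) hq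
  have descent : ∀ t, F (w t) ≤ F w0 →
      F (w (t + 1)) ≤ F (w t) - ‖gradient F (w t)‖ ^ 2 / (2 * L1w0) := by
    intro t ht
    rw [hrec t]
    exact descent_step F hF L1w0 (F w0 + 1) hLpos hHess (w t) (by linarith)
  by_contra hcon
  push_neg at hcon
  set B : ℝ := 2 * F w0 * L1w0 / ε ^ 2 with hB
  have hB0 : 0 ≤ B := by
    rw [hB]
    exact div_nonneg (by nlinarith [hFnn w0]) (by positivity)
  set N : ℕ := ⌊B⌋₊ with hN
  have key : ∀ t : ℕ, t ≤ N + 1 → F (w t) ≤ F w0 - t * (ε ^ 2 / (2 * L1w0)) := by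
    intro t
    induction t with
    | zero => intro _; simp [hw0]
    | succ n ih =>
      intro hn
      have hn' : n ≤ N := by omega
      have hFn : F (w n) ≤ F w0 - n * (ε ^ 2 / (2 * L1w0)) := ih (by omega)
      have hnc : 0 ≤ (n : ℝ) * (ε ^ 2 / (2 * L1w0)) := by positivity
      have hFn' : F (w n) ≤ F w0 := by linarith
      have hd := descent n hFn'
      have hgrad : ε < ‖gradient F (w n)‖ :=
        hcon n (le_trans (Nat.cast_le.mpr hn') (Nat.floor_le hB0))
      have hε2 : ε ^ 2 ≤ ‖gradient F (w n)‖ ^ 2 := by nlinarith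
      have hdiv : ε ^ 2 / (2 * L1w0) ≤ ‖gradient F (w n)‖ ^ 2 / (2 * L1w0) :=
        div_le_div_of_nonneg_right hε2 (by positivity) |>.trans_eq rfl
      push_cast
      linarith
  have h1 := key (N + 1) le_rfl
  have h2 := hFnn (w (N + 1))
  have h3 : ((N : ℝ) + 1) * (ε ^ 2 / (2 * L1w0)) ≤ F w0 := by
    push_cast at h1; linarith
  have h4 : B < (N : ℝ) + 1 := Nat.lt_floor_add_one B
  have h5 : B * (ε ^ 2 / (2 * L1w0)) = F w0 := by
    rw [hB]
    field_simp
  have hcpos : 0 < ε ^ 2 / (2 * L1w0) := by positivity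
  nlinarith [mul_lt_mul_of_pos_right h4 hcpos]
end
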